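/- arXiv:1708.08049 — 3 statements merged into one kernel-verified Lean document; each statement's English description precedes it below -/
import Mathlib

section
/- Suppose μ is a singular cardinal with cf(μ) = ω and μ < 2^ω, (μ_n : n < ω) is a strictly increasing sequence of regular cardinals with supremum μ, J is an ideal on ω extending the ideal of finite sets, and (f_α : α < μ⁺) is a sequence of functions f_α ∈ ∏_{n<ω} μ_n witnessing tcf(∏_{n<ω} μ_n, J) = μ⁺. Assume further that for every A ⊆ μ⁺ with |A| = ℵ₁ one has |{f_α(n) : α ∈ A, n < ω}| = ℵ₁. Then 𝔤𝔭 ≠ μ. -/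
open Cardinal Set

universe u

/-- `C` is a club subset of the ordinal `δ`: it consists of ordinals below `δ`,
is unbounded in `δ`, and contains every limit ordinal `β < δ` with `sup (C ∩ β) = β`. -/
def IsClubIn (δ : Ordinal) (C : Set Ordinal) : Prop :=
  C ⊆ Set.Iio δ ∧ (∀ a < δ, ∃ b ∈ C, a ≤ b) ∧
    ∀ β < δ, Order.IsSuccLimit β → sSup (C ∩ Set.Iio β) = β → β ∈ C

/-- `A` is a set of ordinals of cardinality `c` (witnessed by a bijective
enumeration of `A` by the ordinals below `c.ord`). -/
def HasCard (A : Set Ordinal.{u}) (c : Cardinal.{u}) : Prop :=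
  ∃ e : Ordinal → Ordinal, Set.BijOn e (Set.Iio c.ord) A

/-- An ideal on the set of ordinals below `θ`. -/
structure IdealOn (θ : Ordinal) where
  sets : Set (Set Ordinal)
  subset_Iio : ∀ A ∈ sets, A ⊆ Set.Iio θ
  mem_of_subset : ∀ A ∈ sets, ∀ B ⊆ A, B ∈ sets
  union_mem : ∀ A ∈ sets, ∀ B ∈ sets, A ∪ B ∈ sets
  proper : Set.Iio θ ∉ sets

/-- `(f α : α < lam.ord)` is a `<_J`-increasing, `<_J`-cofinal sequence in the
product `∏_{i<θ} μs i`, witnessing `tcf (∏_{i<θ} μs i, J) = lam`. -/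
def IsTcfWitness (θ : Ordinal) (J : IdealOn θ) (μs : Ordinal → Cardinal)
    (lam : Cardinal) (f : Ordinal → Ordinal → Ordinal) : Prop :=
  (∀ α < lam.ord, ∀ i < θ, f α i < (μs i).ord) ∧
  (∀ α β, α < β → β < lam.ord → {i | i < θ ∧ f β i ≤ f α i} ∈ J.sets) ∧
  (∀ g : Ordinal → Ordinal, (∀ i < θ, g i < (μs i).ord) →
    ∃ α < lam.ord, {i | i < θ ∧ f α i ≤ g i} ∈ J.sets)

/-- The Galvin cardinal characteristic `𝔤𝔭`: the least cardinal `κ` such that every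
family `{C α : α < κ⁺}` of clubs of `ω₁` has a subfamily of size `ℵ₁`
whose intersection is a club of `ω₁`. -/
noncomputable def gp : Cardinal.{u} :=
  sInf {κ : Cardinal.{u} | ∀ C : Ordinal.{u} → Set Ordinal.{u},
    (∀ α < (Order.succ κ).ord, IsClubIn (Cardinal.aleph 1).ord (C α)) →
    ∃ b : Ordinal.{u} → Ordinal.{u},
      (∀ β < (Cardinal.aleph 1).ord, b β < (Order.succ κ).ord) ∧
      Set.InjOn b (Set.Iio (Cardinal.aleph 1).ord) ∧
      IsClubIn (Cardinal.aleph 1).ord (⋂ β ∈ Set.Iio (Cardinal.aleph 1).ord, C (b β))}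


/-! ### Auxiliary lemmas -/


/-- The Galvin-style property defining `gp`. -/
def GoodFam (κ : Cardinal.{u}) : Prop :=
  ∀ C : Ordinal.{u} → Set Ordinal.{u},
    (∀ α < (Order.succ κ).ord, IsClubIn (Cardinal.aleph 1).ord (C α)) →
    ∃ b : Ordinal.{u} → Ordinal.{u},
      (∀ β < (Cardinal.aleph 1).ord, b β < (Order.succ κ).ord) ∧
      Set.InjOn b (Set.Iio (Cardinal.aleph 1).ord) ∧
      IsClubIn (Cardinal.aleph 1).ord (⋂ β ∈ Set.Iio (Cardinal.aleph 1).ord, C (b β))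

theorem gp_eq_sInf_goodFam : gp.{u} = sInf {κ : Cardinal.{u} | GoodFam κ} := rfl

theorem omega1_isLimit : Order.IsSuccLimit ((Cardinal.aleph 1).ord : Ordinal.{u}) :=
  Cardinal.isSuccLimit_ord (Cardinal.aleph0_le_aleph 1)

theorem sup_nat_lt_omega1 (g : ℕ → Ordinal.{u}) (h : ∀ n, g n < (Cardinal.aleph 1).ord) :
    (⨆ n, g n) < (Cardinal.aleph 1).ord := by
  apply Ordinal.iSup_lt_ord_lift _ h
  rw [Cardinal.isRegular_aleph_one.cof_eq, Cardinal.mk_nat, Cardinal.lift_aleph0]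
  exact Cardinal.aleph0_lt_aleph_one

theorem sSup_squeeze {s t : Set Ordinal.{u}} {β : Ordinal.{u}} (hst : s ⊆ t)
    (ht : t ⊆ Set.Iio β) (hβ : Order.IsSuccLimit β) (h : sSup s = β) : sSup t = β := by
  rcases s.eq_empty_or_nonempty with rfl | hs
  · rw [csSup_empty] at h
    exact absurd h.symm hβ.ne_bot
  · refine le_antisymm (csSup_le' fun x hx => (ht hx).le) ?_
    rw [← h]
    exact csSup_le_csSup ⟨β, fun x hx => (ht hx).le⟩ hs hst

theorem isClubIn_iInter_nat (C : ℕ → Set Ordinal.{u})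
    (hC : ∀ n, IsClubIn (Cardinal.aleph 1).ord (C n)) :
    IsClubIn (Cardinal.aleph 1).ord (⋂ n, C n) := by
  set Ω : Ordinal.{u} := (Cardinal.aleph 1).ord with hΩdef
  have hlim : Order.IsSuccLimit Ω := omega1_isLimit
  refine ⟨(Set.iInter_subset C 0).trans (hC 0).1, ?_, ?_⟩
  · intro a ha
    have hnext : ∀ (n : ℕ) (x : Ordinal.{u}), ∃ b, x < Ω → b ∈ C n ∧ x + 1 ≤ b := by
      intro n x
      by_cases hx : x < Ω
      · obtain ⟨b, hb, hxb⟩ := (hC n).2.1 (x + 1)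
          (by rw [Ordinal.add_one_eq_succ]; exact hlim.succ_lt hx)
        exact ⟨b, fun _ => ⟨hb, hxb⟩⟩
      · exact ⟨0, fun h => absurd h hx⟩
    choose F hF using hnext
    set H : Ordinal.{u} → Ordinal.{u} := fun x => ⨆ n, F n x with hHdef
    have hFlt : ∀ (n : ℕ) (x : Ordinal.{u}), x < Ω → F n x < Ω :=
      fun n x hx => (hC n).1 ((hF n x hx).1)
    have hHlt : ∀ x, x < Ω → H x < Ω := fun x hx =>
      sup_nat_lt_omega1 _ fun n => hFlt n x hx
    have hFleH : ∀ (n : ℕ) (x : Ordinal.{u}), F n x ≤ H x :=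
      fun n x => le_ciSup (Ordinal.bddAbove_range _) n
    have hxH : ∀ x, x < Ω → x + 1 ≤ H x := fun x hx => (hF 0 x hx).2.trans (hFleH 0 x)
    obtain ⟨g, hg0, hgs⟩ : ∃ g : ℕ → Ordinal.{u}, g 0 = a ∧ ∀ k, g (k + 1) = H (g k) :=
      ⟨fun k => Nat.rec a (fun _ x => H x) k, rfl, fun k => rfl⟩
    have hglt : ∀ k, g k < Ω := by
      intro k
      induction k with
      | zero => rw [hg0]; exact ha
      | succ k ih => rw [hgs]; exact hHlt _ ih
    have hgmono : ∀ k, g k < g (k + 1) := by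
      intro k
      rw [hgs]
      exact lt_of_lt_of_le (lt_add_one (g k)) (hxH _ (hglt k))
    set s : Ordinal.{u} := ⨆ k, g k with hsdef
    have hslt : s < Ω := sup_nat_lt_omega1 g hglt
    have hgles : ∀ k, g k ≤ s := fun k => le_ciSup (Ordinal.bddAbove_range _) k
    have hglts : ∀ k, g k < s := fun k => lt_of_lt_of_le (hgmono k) (hgles (k + 1))
    have hslim : Order.IsSuccLimit s := by
      refine Ordinal.isSuccLimit_iff.2 ⟨?_, Order.isSuccPrelimit_of_succ_lt ?_⟩
      · exact fun h0 => absurd (h0 ▸ hglts 0) (not_lt_of_ge zero_le)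
      · intro x hx
        obtain ⟨k, hk⟩ := (lt_ciSup_iff (Ordinal.bddAbove_range _)).1 hx
        calc Order.succ x ≤ g k := Order.succ_le_of_lt hk
          _ < s := hglts k
    have hsC : ∀ n, s ∈ C n := by
      intro n
      apply (hC n).2.2 s hslt hslim
      apply le_antisymm (csSup_le' fun x hx => hx.2.le)
      refine ciSup_le fun k => ?_
      have hmem : F n (g k) ∈ C n ∩ Set.Iio s := by
        refine ⟨(hF n (g k) (hglt k)).1, ?_⟩
        calc F n (g k) ≤ H (g k) := hFleH n (g k)
          _ = g (k + 1) := (hgs k).symm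
          _ < s := hglts (k + 1)
      calc g k ≤ g k + 1 := le_of_lt (lt_add_one (g k))
        _ ≤ F n (g k) := (hF n (g k) (hglt k)).2
        _ ≤ sSup (C n ∩ Set.Iio s) := le_csSup ⟨s, fun x hx => hx.2.le⟩ hmem
    exact ⟨s, Set.mem_iInter.2 hsC, by rw [← hg0]; exact hgles 0⟩
  · intro β hβ hβlim hsup
    refine Set.mem_iInter.2 fun n => (hC n).2.2 β hβ hβlim ?_
    exact sSup_squeeze (Set.inter_subset_inter_left _ (Set.iInter_subset C n))
      (fun x hx => hx.2) hβlim hsup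

/-- If `μ` is a singular cardinal with `cf μ = ω` and `μ < 2^ω`,
`(μs n : n < ω)` is a strictly increasing sequence of regular cardinals with supremum `μ`,
`J` is an ideal on `ω` extending the ideal of finite (= bounded) sets, `f` witnesses
`tcf (∏_{n<ω} μs n, J) = μ⁺`, and every `A ⊆ μ⁺` of size `ℵ₁` satisfies
`|{f α n : α ∈ A, n < ω}| = ℵ₁`, then `𝔤𝔭 ≠ μ`. -/
theorem gp_ne_of_scale_omega (μ : Cardinal.{u}) (μs : Ordinal.{u} → Cardinal.{u})
    (J : IdealOn Ordinal.omega0.{u}) (f : Ordinal.{u} → Ordinal.{u} → Ordinal.{u})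
    (hcof : μ.ord.cof = Cardinal.aleph0)
    (hsing : Cardinal.aleph0 < μ)
    (hcont : μ < 2 ^ Cardinal.aleph0)
    (hreg : ∀ i < Ordinal.omega0, (μs i).IsRegular)
    (hmono : ∀ i j, i < j → j < Ordinal.omega0 → μs i < μs j)
    (hsup : sSup (μs '' Set.Iio Ordinal.omega0) = μ)
    (hJ : ∀ δ < Ordinal.omega0, Set.Iio δ ∈ J.sets)
    (hf : IsTcfWitness Ordinal.omega0 J μs (Order.succ μ) f)
    (hA : ∀ A : Set Ordinal.{u}, A ⊆ Set.Iio (Order.succ μ).ord →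
      HasCard A (Cardinal.aleph 1) →
      HasCard {x : Ordinal | ∃ α ∈ A, ∃ i < Ordinal.omega0, f α i = x} (Cardinal.aleph 1)) :
    gp ≠ μ := by
  intro hgp
  have hΩlim : Order.IsSuccLimit ((Cardinal.aleph 1).ord : Ordinal.{u}) := omega1_isLimit
  rw [gp_eq_sInf_goodFam] at hgp
  have hSne : {κ : Cardinal.{u} | GoodFam κ}.Nonempty := by
    by_contra h
    rw [Set.not_nonempty_iff_eq_empty] at h
    rw [h, Cardinal.sInf_empty] at hgp
    rw [← hgp] at hsing
    exact absurd hsing (by simp)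
  have hμS : GoodFam μ := hgp ▸ csInf_mem hSne
  have hμslt : ∀ n : ℕ, μs (n : Ordinal.{u}) < μ := by
    intro n
    have h1 : μs (n : Ordinal.{u}) < μs ((n + 1 : ℕ) : Ordinal.{u}) := by
      apply hmono
      · exact_mod_cast Nat.lt_succ_self n
      · exact Ordinal.nat_lt_omega0 _
    have h2 : μs ((n + 1 : ℕ) : Ordinal.{u}) ≤ μ := by
      rw [← hsup]
      exact le_csSup Cardinal.bddAbove_of_small
        (Set.mem_image_of_mem _ (Ordinal.nat_lt_omega0 _))
    exact lt_of_lt_of_le h1 h2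
  have hfail : ∀ n : ℕ, ¬ GoodFam (μs (n : Ordinal.{u})) := by
    intro n hn
    have h := csInf_le (OrderBot.bddBelow _) (Set.mem_setOf_eq ▸ hn :
      μs (n : Ordinal.{u}) ∈ {κ : Cardinal.{u} | GoodFam κ})
    rw [hgp] at h
    exact absurd (hμslt n) (not_lt_of_ge h)
  have hfam : ∀ n : ℕ, ∃ C : Ordinal.{u} → Set Ordinal.{u},
      (∀ α < (Order.succ (μs (n : Ordinal.{u}))).ord,
        IsClubIn (Cardinal.aleph 1).ord (C α)) ∧
      ¬ ∃ b : Ordinal.{u} → Ordinal.{u},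
        (∀ β < (Cardinal.aleph 1).ord, b β < (Order.succ (μs (n : Ordinal.{u}))).ord) ∧
        Set.InjOn b (Set.Iio (Cardinal.aleph 1).ord) ∧
        IsClubIn (Cardinal.aleph 1).ord
          (⋂ β ∈ Set.Iio (Cardinal.aleph 1).ord, C (b β)) := by
    intro n
    have h := hfail n
    rw [GoodFam, not_forall] at h
    obtain ⟨C, hC⟩ := h
    rw [Classical.not_imp] at hC
    exact ⟨C, hC.1, hC.2⟩
  choose Cf hCf_club hCf_nofam using hfam
  have hford' : ∀ α, α < (Order.succ μ).ord → ∀ n : ℕ,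
      f α (n : Ordinal.{u}) < (Order.succ (μs (n : Ordinal.{u}))).ord := fun α hα n =>
    lt_of_lt_of_le (hf.1 α hα n (Ordinal.nat_lt_omega0 n))
      (Cardinal.ord_le_ord.2 (Order.le_succ _))
  set D : Ordinal.{u} → Set Ordinal.{u} := fun α =>
    if α < (Order.succ μ).ord then ⋂ n : ℕ, Cf n (f α n)
    else Set.Iio (Cardinal.aleph 1).ord with hDdef
  have hDclub : ∀ α < (Order.succ μ).ord, IsClubIn (Cardinal.aleph 1).ord (D α) := by
    intro α hα
    simp only [hDdef, if_pos hα]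
    exact isClubIn_iInter_nat _ fun n => hCf_club n _ (hford' α hα n)
  obtain ⟨b, hb_lt, hb_inj, hb_club⟩ := hμS D hDclub
  set A : Set Ordinal.{u} := b '' Set.Iio (Cardinal.aleph 1).ord with hAdef
  have hAsub : A ⊆ Set.Iio (Order.succ μ).ord := by
    rintro _ ⟨β, hβ, rfl⟩
    exact hb_lt β hβ
  have hAcard : HasCard A (Cardinal.aleph 1) := ⟨b, hb_inj.bijOn_image⟩
  have hXcard : HasCard {x : Ordinal.{u} | ∃ α ∈ A, ∃ i < Ordinal.omega0, f α i = x}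
      (Cardinal.aleph 1) := hA A hAsub hAcard
  have hXuncount : ¬ ({x : Ordinal.{u} | ∃ α ∈ A, ∃ i < Ordinal.omega0, f α i = x}).Countable := by
    obtain ⟨e, he⟩ := hXcard
    intro hc
    have h1 : #({x : Ordinal.{u} | ∃ α ∈ A, ∃ i < Ordinal.omega0, f α i = x}) =
        Cardinal.lift.{u + 1, u} (Cardinal.aleph 1) := by
      rw [← Cardinal.mk_congr (Set.BijOn.equiv e he), Ordinal.mk_Iio_ordinal, Cardinal.card_ord]
    have h2 := hc.le_aleph0
    rw [h1, show (Cardinal.aleph0 : Cardinal.{u + 1}) =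
      Cardinal.lift.{u + 1, u} (Cardinal.aleph0 : Cardinal.{u}) from Cardinal.lift_aleph0.symm] at h2
    exact absurd (Cardinal.lift_le.1 h2) (not_le_of_gt Cardinal.aleph0_lt_aleph_one)
  set Xn : ℕ → Set Ordinal.{u} := fun n => {x | ∃ α ∈ A, f α (n : Ordinal.{u}) = x} with hXndef
  have hXeq : {x : Ordinal.{u} | ∃ α ∈ A, ∃ i < Ordinal.omega0, f α i = x} = ⋃ n : ℕ, Xn n := by
    ext x
    simp only [hXndef, Set.mem_setOf_eq, Set.mem_iUnion]
    constructor
    · rintro ⟨α, hα, i, hi, rfl⟩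
      obtain ⟨n, rfl⟩ := Ordinal.lt_omega0.1 hi
      exact ⟨n, α, hα, rfl⟩
    · rintro ⟨n, α, hα, rfl⟩
      exact ⟨α, hα, n, Ordinal.nat_lt_omega0 n, rfl⟩
  obtain ⟨n, hn⟩ : ∃ n : ℕ, ¬ (Xn n).Countable := by
    by_contra h
    push_neg at h
    exact hXuncount (hXeq ▸ Set.countable_iUnion h)
  have hcard : #(Set.Iio ((Cardinal.aleph 1).ord : Ordinal.{u})) ≤ #(Xn n) := by
    rw [Ordinal.mk_Iio_ordinal, Cardinal.card_ord]
    have h1 : Cardinal.aleph0 < #(Xn n) :=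
      not_le.1 fun h => hn (Cardinal.le_aleph0_iff_set_countable.1 h)
    rw [Cardinal.lift_aleph, Ordinal.lift_one, ← Cardinal.succ_aleph0]
    exact Order.succ_le_of_lt h1
  obtain ⟨j⟩ := (Cardinal.le_def _ _).1 hcard
  set b' : Ordinal.{u} → Ordinal.{u} := fun β =>
    if h : β < (Cardinal.aleph 1).ord then
      ((j ⟨β, h⟩ : ↥(Xn n)) : Ordinal.{u}) else 0 with hb'def
  have hb'mem : ∀ β, ∀ h : β < (Cardinal.aleph 1).ord, b' β ∈ Xn n := by
    intro β h
    simp only [hb'def, dif_pos h]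
    exact (j ⟨β, h⟩).2
  have hb'lt : ∀ β < (Cardinal.aleph 1).ord,
      b' β < (Order.succ (μs (n : Ordinal.{u}))).ord := by
    intro β hβ
    obtain ⟨α, hαA, hfα⟩ := hb'mem β hβ
    rw [← hfα]
    exact hford' α (hAsub hαA) n
  apply hCf_nofam n
  refine ⟨b', hb'lt, ?_, ?_⟩
  · intro x hx y hy hxy
    rw [Set.mem_Iio] at hx hy
    rw [hb'def] at hxy
    simp only [dif_pos hx, dif_pos hy] at hxy
    have h := j.injective (Subtype.coe_injective hxy)
    exact congrArg Subtype.val h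
  · have hEsub : (⋂ β' ∈ Set.Iio (Cardinal.aleph 1).ord, D (b β')) ⊆
        ⋂ β' ∈ Set.Iio (Cardinal.aleph 1).ord, Cf n (b' β') := by
      intro x hx
      refine Set.mem_iInter₂.2 fun β' hβ' => ?_
      obtain ⟨α, hαA, hfα⟩ := hb'mem β' hβ'
      rw [hAdef] at hαA
      obtain ⟨γ, hγ, rfl⟩ := hαA
      have hx' := Set.mem_iInter₂.1 hx γ hγ
      simp only [hDdef, if_pos (hb_lt γ hγ)] at hx'
      have hxn := Set.mem_iInter.1 hx' n
      rwa [hfα] at hxn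
    refine ⟨?_, ?_, ?_⟩
    · intro x hx
      exact (hCf_club n _ (hb'lt 0 hΩlim.pos)).1 (Set.mem_iInter₂.1 hx 0 hΩlim.pos)
    · intro a ha
      obtain ⟨y, hy, hay⟩ := hb_club.2.1 a ha
      exact ⟨y, hEsub hy, hay⟩
    · intro β hβ hβlim hsup'
      refine Set.mem_iInter₂.2 fun γ hγ => (hCf_club n _ (hb'lt γ hγ)).2.2 β hβ hβlim ?_
      refine sSup_squeeze (Set.inter_subset_inter_left _ ?_) (fun x hx => hx.2) hβlim hsup'
      exact Set.biInter_subset_of_mem hγ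
end

section
/- Let κ be a regular cardinal and θ ≤ κ an infinite regular cardinal. Assume: (a) μ is a singular cardinal with cf(μ) = θ and κ⁺ < μ; (b) (μ_i : i < θ) is a strictly increasing sequence of regular cardinals with supremum μ and κ⁺ < μ_0; (c) J is an ideal on θ extending the ideal of bounded subsets of θ; (d) (f_α : α < λ) witnesses tcf(∏_{i<θ} μ_i, J) = λ; (e) μ ≤ ν < λ; (f) for every A ⊆ λ with |A| = κ⁺ one has |{f_α(i) : α ∈ A, i < θ}| = κ⁺. Then 𝔤𝔭_κ ≠ ν. -/
open Cardinal Set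

universe u

/-- The generalized Galvin characteristic `𝔤𝔭_κ`: the least `lam` such that every family
`{C α : α < lam⁺}` of clubs of `κ⁺` has a subfamily of size `κ⁺` whose intersection
is a club of `κ⁺`. -/
noncomputable def gpK (κ : Cardinal.{u}) : Cardinal.{u} :=
  sInf {lam : Cardinal.{u} | ∀ C : Ordinal.{u} → Set Ordinal.{u},
    (∀ α < (Order.succ lam).ord, IsClubIn (Order.succ κ).ord (C α)) →
    ∃ b : Ordinal.{u} → Ordinal.{u},
      (∀ β < (Order.succ κ).ord, b β < (Order.succ lam).ord) ∧
      Set.InjOn b (Set.Iio (Order.succ κ).ord) ∧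
      IsClubIn (Order.succ κ).ord (⋂ β ∈ Set.Iio (Order.succ κ).ord, C (b β))}

lemma mem_of_sSup_inter {δ β : Ordinal.{u}} {X S : Set Ordinal.{u}} (hX : IsClubIn δ X)
    (hS : S ⊆ X) (hβδ : β < δ) (hlim : Order.IsSuccLimit β)
    (hsup : sSup (S ∩ Set.Iio β) = β) : β ∈ X := by
  rcases (S ∩ Set.Iio β).eq_empty_or_nonempty with h | h
  · rw [h, csSup_empty] at hsup
    exact absurd hsup.symm hlim.ne_bot
  · refine hX.2.2 β hβδ hlim (le_antisymm (csSup_le' ?_) ?_)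
    · rintro x ⟨-, hx⟩; exact le_of_lt hx
    · calc β = sSup (S ∩ Set.Iio β) := hsup.symm
        _ ≤ sSup (X ∩ Set.Iio β) :=
          csSup_le_csSup ⟨β, fun x hx => le_of_lt hx.2⟩ h fun x hx => ⟨hS hx.1, hx.2⟩

lemma isClubIn_biInter_of_subset {δ : Ordinal.{u}} {s : Set Ordinal.{u}}
    {X : Ordinal.{u} → Set Ordinal.{u}} {D : Set Ordinal.{u}} (hne : s.Nonempty)
    (hD : IsClubIn δ D) (hX : ∀ i ∈ s, IsClubIn δ (X i)) (hDX : ∀ i ∈ s, D ⊆ X i) :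
    IsClubIn δ (⋂ i ∈ s, X i) := by
  obtain ⟨i₀, hi₀⟩ := hne
  refine ⟨fun x hx => (hX i₀ hi₀).1 (Set.biInter_subset_of_mem hi₀ hx), ?_, ?_⟩
  · intro a ha
    obtain ⟨b, hb, hab⟩ := hD.2.1 a ha
    exact ⟨b, Set.mem_biInter fun i hi => hDX i hi hb, hab⟩
  · intro β hβ hlim hsup
    exact Set.mem_biInter fun i hi =>
      mem_of_sSup_inter (hX i hi) (Set.biInter_subset_of_mem hi) hβ hlim hsup

lemma isClubIn_biInter_lt {δ o : Ordinal.{u}} (hℵ₀ : ℵ₀ < δ.cof) (ho : o ≠ 0)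
    (hcard : o.card < δ.cof) {X : Ordinal.{u} → Set Ordinal.{u}}
    (hX : ∀ i < o, IsClubIn δ (X i)) : IsClubIn δ (⋂ i ∈ Set.Iio o, X i) := by
  classical
  have hδlim : Order.IsSuccLimit δ := Ordinal.aleph0_le_cof.1 hℵ₀.le
  have hopos : 0 < o := pos_iff_ne_zero.2 ho
  refine ⟨fun x hx => (hX 0 hopos).1 (Set.biInter_subset_of_mem (Set.mem_Iio.2 hopos) hx), ?_, ?_⟩
  swap
  · intro β hβ hlim hsup
    exact Set.mem_biInter fun i hi =>
      mem_of_sSup_inter (hX i hi) (Set.biInter_subset_of_mem (Set.mem_Iio.2 hi)) hβ hlim hsup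
  intro a ha
  have hlt1 : ∀ x : Ordinal.{u}, x < x + 1 := fun x => by
    rw [Ordinal.add_one_eq_succ]; exact Order.lt_succ x
  have htot : ∀ x i : Ordinal.{u}, ∃ b, x < δ → i < o → b ∈ X i ∧ x ≤ b := by
    intro x i
    rcases Classical.em (x < δ ∧ i < o) with h | h
    · obtain ⟨b, hb1, hb2⟩ := (hX i h.2).2.1 x h.1
      exact ⟨b, fun _ _ => ⟨hb1, hb2⟩⟩
    · exact ⟨0, fun h1 h2 => absurd ⟨h1, h2⟩ h⟩
  choose w hw using htot
  have hwlt : ∀ x, x < δ → ∀ i, i < o → w x i < δ := fun x hx i hi =>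
    (hX i hi).1 (hw x i hx hi).1
  have hstep : ∀ x : Ordinal.{u}, ∃ y, x < y ∧ (x < δ → y < δ) ∧
      ∀ i, i < o → x < δ → w x i < y := by
    intro x
    refine ⟨max (x + 1) (Ordinal.bsup.{u, u} o fun i _ => w x i + 1), ?_, ?_, ?_⟩
    · exact lt_of_lt_of_le (hlt1 x) (le_max_left _ _)
    · intro hx
      apply max_lt
      · rw [Ordinal.add_one_eq_succ]; exact hδlim.succ_lt hx
      · refine Ordinal.bsup_lt_ord hcard fun i hi => ?_
        rw [Ordinal.add_one_eq_succ]; exact hδlim.succ_lt (hwlt x hx i hi)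
    · intro i hi hx
      refine lt_of_lt_of_le (hlt1 _) (le_trans ?_ (le_max_right _ _))
      exact Ordinal.le_bsup (fun i _ => w x i + 1) i hi
  choose step hstep1 hstep2 hstep3 using hstep
  let seq : ℕ → Ordinal.{u} := fun n => Nat.recAux a (fun _ ih => step ih) n
  have hseq0 : seq 0 = a := rfl
  have hseqsucc : ∀ n, seq (n + 1) = step (seq n) := fun _ => rfl
  have hseqlt : ∀ n, seq n < δ := by
    intro n; induction n with
    | zero => exact ha
    | succ n ih => rw [hseqsucc]; exact hstep2 _ ih
  have hseqmono : ∀ n, seq n < seq (n + 1) := fun n => hstep1 (seq n)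
  set aω : Ordinal.{u} := ⨆ n : ℕ, seq n with haω
  have hseq_le : ∀ n, seq n ≤ aω := fun n => Ordinal.le_iSup (fun n : ℕ => seq n) n
  have haωδ : aω < δ := by
    refine Ordinal.iSup_lt_ord_lift ?_ hseqlt
    rwa [Cardinal.mk_nat, Cardinal.lift_aleph0]
  have haωlim : Order.IsSuccLimit aω := by
    refine Ordinal.isSuccLimit_iff.2 ⟨?_, Order.isSuccPrelimit_of_succ_lt ?_⟩
    · exact (lt_of_le_of_lt (zero_le (a := seq 0))
        (lt_of_lt_of_le (hseqmono 0) (hseq_le 1))).ne'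
    · intro b hb
      obtain ⟨n, hn⟩ := Ordinal.lt_iSup_iff.1 hb
      calc Order.succ b ≤ seq n := Order.succ_le_of_lt hn
        _ < seq (n + 1) := hseqmono n
        _ ≤ aω := hseq_le _
  have hmem : ∀ i, i < o → aω ∈ X i := by
    intro i hi
    have hwin : ∀ n : ℕ, w (seq n) i ∈ X i ∩ Set.Iio aω := by
      intro n
      refine ⟨(hw _ i (hseqlt n) hi).1, ?_⟩
      have h1 : w (seq n) i < seq (n + 1) := by
        rw [hseqsucc]; exact hstep3 _ i hi (hseqlt n)
      exact lt_of_lt_of_le h1 (hseq_le (n + 1))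
    have hbdd : BddAbove (X i ∩ Set.Iio aω) := ⟨aω, fun x hx => le_of_lt hx.2⟩
    have hsupeq : sSup (X i ∩ Set.Iio aω) = aω := by
      refine le_antisymm (csSup_le' fun x hx => le_of_lt hx.2) ?_
      refine Ordinal.iSup_le fun n => ?_
      exact le_trans (hw _ i (hseqlt n) hi).2 (le_csSup hbdd (hwin n))
    exact (hX i hi).2.2 aω haωδ haωlim hsupeq
  exact ⟨aω, Set.mem_biInter fun i hi => hmem i hi, hseq0 ▸ hseq_le 0⟩

lemma mem_and_min_of_sInf_eq {T : Set Cardinal.{u}} {ν : Cardinal.{u}}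
    (h : sInf T = ν) (hν : ν ≠ 0) : ν ∈ T ∧ ∀ c ∈ T, ν ≤ c := by
  rcases T.eq_empty_or_nonempty with hT | hT
  · rw [hT, Cardinal.sInf_empty] at h
    exact absurd h.symm hν
  · exact ⟨h ▸ csInf_mem hT, fun c hc => h ▸ csInf_le (OrderBot.bddBelow _) hc⟩

/-- Let `κ` be regular, `θ ≤ κ` infinite regular, `μ` singular with
`cf μ = θ` and `κ⁺ < μ`, `(μs i : i < θ)` strictly increasing regular with supremum `μ`
and `κ⁺ < μs 0`, `J` an ideal on `θ` extending the bounded ideal, `f` a witness for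
`tcf (∏_{i<θ} μs i, J) = lam`, `μ ≤ ν < lam`, and suppose every `A ⊆ lam` of size `κ⁺`
satisfies `|{f α i : α ∈ A, i < θ}| = κ⁺`. Then `𝔤𝔭_κ ≠ ν`. -/
theorem gpK_ne_of_scale (κ θ μ ν lam : Cardinal.{u}) (μs : Ordinal.{u} → Cardinal.{u})
    (J : IdealOn θ.ord) (f : Ordinal.{u} → Ordinal.{u} → Ordinal.{u})
    (hκ : κ.IsRegular) (hθ : θ.IsRegular) (hθκ : θ ≤ κ)
    (hcof : μ.ord.cof = θ) (hκμ : Order.succ κ < μ)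
    (hreg : ∀ i < θ.ord, (μs i).IsRegular)
    (hmono : ∀ i j, i < j → j < θ.ord → μs i < μs j)
    (hsup : sSup (μs '' Set.Iio θ.ord) = μ)
    (hμs0 : Order.succ κ < μs 0)
    (hJ : ∀ δ < θ.ord, Set.Iio δ ∈ J.sets)
    (hf : IsTcfWitness θ.ord J μs lam f)
    (hμν : μ ≤ ν) (hνlam : ν < lam)
    (hA : ∀ A : Set Ordinal.{u}, A ⊆ Set.Iio lam.ord →
      HasCard A (Order.succ κ) →
      HasCard {x : Ordinal | ∃ α ∈ A, ∃ i < θ.ord, f α i = x} (Order.succ κ)) :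
    gpK κ ≠ ν := by
  intro hgp
  classical
  have hκℵ₀ : ℵ₀ ≤ κ := hκ.aleph0_le
  have hsκ : (Order.succ κ).IsRegular := Cardinal.isRegular_succ hκℵ₀
  have hcofδ : (Order.succ κ).ord.cof = Order.succ κ := hsκ.cof_eq
  have hνne : ν ≠ 0 :=
    (lt_of_lt_of_le (lt_of_le_of_lt zero_le hκμ) hμν).ne'
  have hgp' : sInf {lam : Cardinal.{u} | ∀ C : Ordinal.{u} → Set Ordinal.{u},
      (∀ α < (Order.succ lam).ord, IsClubIn (Order.succ κ).ord (C α)) →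
      ∃ b : Ordinal.{u} → Ordinal.{u},
        (∀ β < (Order.succ κ).ord, b β < (Order.succ lam).ord) ∧
        Set.InjOn b (Set.Iio (Order.succ κ).ord) ∧
        IsClubIn (Order.succ κ).ord
          (⋂ β ∈ Set.Iio (Order.succ κ).ord, C (b β))} = ν := hgp
  obtain ⟨hνmem, hνmin⟩ := mem_and_min_of_sInf_eq hgp' hνne
  rw [Set.mem_setOf_eq] at hνmem
  -- each μs i is below ν
  have hθlim : Order.IsSuccLimit θ.ord := Cardinal.isSuccLimit_ord hθ.aleph0_le
  have hμilt : ∀ i < θ.ord, μs i < ν := by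
    intro i hi
    have hi1 : i + 1 < θ.ord := by
      rw [Ordinal.add_one_eq_succ]; exact hθlim.succ_lt hi
    have h1 : μs i < μs (i + 1) := by
      refine hmono i (i + 1) ?_ hi1
      rw [Ordinal.add_one_eq_succ]; exact Order.lt_succ i
    have hbdd : BddAbove (μs '' Set.Iio θ.ord) :=
      Cardinal.bddAbove_iff_small.2 inferInstance
    have h2 : μs (i + 1) ≤ μ := hsup ▸ le_csSup hbdd ⟨i + 1, Set.mem_Iio.2 hi1, rfl⟩
    exact lt_of_lt_of_le (lt_of_lt_of_le h1 h2) hμν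
  -- bad families of clubs for each i < θ.ord
  have hbad : ∀ i, i < θ.ord → ∃ C : Ordinal.{u} → Set Ordinal.{u},
      (∀ α < (Order.succ (μs i)).ord, IsClubIn (Order.succ κ).ord (C α)) ∧
      ¬ ∃ b : Ordinal.{u} → Ordinal.{u},
        (∀ β < (Order.succ κ).ord, b β < (Order.succ (μs i)).ord) ∧
        Set.InjOn b (Set.Iio (Order.succ κ).ord) ∧
        IsClubIn (Order.succ κ).ord
          (⋂ β ∈ Set.Iio (Order.succ κ).ord, C (b β)) := by
    intro i hi
    have hnot : μs i ∉ {lam : Cardinal.{u} | ∀ C : Ordinal.{u} → Set Ordinal.{u},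
        (∀ α < (Order.succ lam).ord, IsClubIn (Order.succ κ).ord (C α)) →
        ∃ b : Ordinal.{u} → Ordinal.{u},
          (∀ β < (Order.succ κ).ord, b β < (Order.succ lam).ord) ∧
          Set.InjOn b (Set.Iio (Order.succ κ).ord) ∧
          IsClubIn (Order.succ κ).ord
            (⋂ β ∈ Set.Iio (Order.succ κ).ord, C (b β))} := by
      intro hmem
      exact absurd (hνmin _ hmem) (not_le.2 (hμilt i hi))
    rw [Set.mem_setOf_eq] at hnot
    obtain ⟨C, hC⟩ := not_forall.1 hnot
    exact ⟨C, (_root_.not_imp.1 hC).1, (_root_.not_imp.1 hC).2⟩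
  choose! Ci hCi1 hCi2 using hbad
  -- the combined family
  have hordle : (Order.succ ν).ord ≤ lam.ord :=
    Cardinal.ord_le_ord.2 (Order.succ_le_of_lt hνlam)
  have hflt : ∀ α < (Order.succ ν).ord, ∀ i < θ.ord, f α i < (μs i).ord :=
    fun α hα i hi => hf.1 α (lt_of_lt_of_le hα hordle) i hi
  have hfs : ∀ α < (Order.succ ν).ord, ∀ i < θ.ord,
      f α i < (Order.succ (μs i)).ord := fun α hα i hi =>
    lt_of_lt_of_le (hflt α hα i hi) (Cardinal.ord_le_ord.2 (Order.le_succ _))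
  have hℵ₀cof : ℵ₀ < (Order.succ κ).ord.cof := by
    rw [hcofδ]; exact lt_of_le_of_lt hκℵ₀ (Order.lt_succ κ)
  have hθne : θ.ord ≠ 0 := by
    have : (0 : Ordinal) < θ.ord := by
      rw [← Cardinal.ord_zero]; exact Cardinal.ord_lt_ord.2 hθ.pos
    exact this.ne'
  have hθcof : θ.ord.card < (Order.succ κ).ord.cof := by
    rw [hcofδ, Cardinal.card_ord]
    exact lt_of_le_of_lt hθκ (Order.lt_succ κ)
  have hclubs : ∀ α < (Order.succ ν).ord,
      IsClubIn (Order.succ κ).ord (⋂ i ∈ Set.Iio θ.ord, Ci i (f α i)) :=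
    fun α hα => isClubIn_biInter_lt hℵ₀cof hθne hθcof
      (fun i hi => hCi1 i hi _ (hfs α hα i hi))
  obtain ⟨b, hb1, hb2, hb3⟩ := hνmem (fun α => ⋂ i ∈ Set.Iio θ.ord, Ci i (f α i)) hclubs
  -- the set A
  have hAsub : b '' Set.Iio (Order.succ κ).ord ⊆ Set.Iio lam.ord := by
    rintro x ⟨β, hβ, rfl⟩
    exact lt_of_lt_of_le (hb1 β hβ) hordle
  have hAcard : HasCard (b '' Set.Iio (Order.succ κ).ord) (Order.succ κ) :=
    ⟨b, hb2.bijOn_image⟩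
  obtain ⟨e, he⟩ := hA _ hAsub hAcard
  -- every slice is small
  have hslice : ∀ i, i < θ.ord →
      #((fun α => f α i) '' (b '' Set.Iio (Order.succ κ).ord)) ≤
        Cardinal.lift.{u + 1} κ := by
    intro i hi
    by_contra hcon
    push_neg at hcon
    have hsucc : #(Set.Iio (Order.succ κ).ord) ≤
        #((fun α => f α i) '' (b '' Set.Iio (Order.succ κ).ord)) := by
      rw [Ordinal.mk_Iio_ordinal, Cardinal.card_ord, Cardinal.lift_succ]
      exact Order.succ_le_of_lt hcon
    obtain ⟨g⟩ := (Cardinal.le_def _ _).1 hsucc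
    set b' : Ordinal.{u} → Ordinal.{u} := fun x =>
      if h : x ∈ Set.Iio (Order.succ κ).ord then (g ⟨x, h⟩ : Ordinal) else 0 with hb'
    have hb'mem : ∀ β, β ∈ Set.Iio (Order.succ κ).ord →
        b' β ∈ (fun α => f α i) '' (b '' Set.Iio (Order.succ κ).ord) := by
      intro β hβ
      rw [hb']
      simp only [dif_pos hβ]
      exact (g ⟨β, hβ⟩).2
    apply hCi2 i hi
    refine ⟨b', ?_, ?_, ?_⟩
    · intro β hβ
      obtain ⟨α, hαA, hfe⟩ := hb'mem β hβ
      obtain ⟨β₀, hβ₀, rfl⟩ := hαA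
      rw [← hfe]
      exact hfs _ (hb1 β₀ hβ₀) i hi
    · intro x hx y hy hxy
      rw [hb'] at hxy
      simp only [dif_pos hx, dif_pos hy] at hxy
      have := g.injective (Subtype.coe_injective hxy)
      exact congrArg Subtype.val this
    · refine isClubIn_biInter_of_subset ⟨0, Set.mem_Iio.2 hsκ.ord_pos⟩ hb3 ?_ ?_
      · intro β hβ
        obtain ⟨α, hαA, hfe⟩ := hb'mem β hβ
        obtain ⟨β₀, hβ₀, rfl⟩ := hαA
        rw [← hfe]
        exact hCi1 i hi _ (hfs _ (hb1 β₀ hβ₀) i hi)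
      · intro β hβ
        obtain ⟨α, hαA, hfe⟩ := hb'mem β hβ
        obtain ⟨β₀, hβ₀, rfl⟩ := hαA
        intro x hx
        have h1 : x ∈ ⋂ j ∈ Set.Iio θ.ord, Ci j (f (b β₀) j) :=
          Set.biInter_subset_of_mem hβ₀ hx
        have h2 : x ∈ Ci i (f (b β₀) i) :=
          Set.biInter_subset_of_mem (Set.mem_Iio.2 hi) h1
        have h3 : f (b β₀) i = b' β := hfe
        exact h3 ▸ h2
  -- counting
  have hBeq : {x : Ordinal.{u} | ∃ α ∈ b '' Set.Iio (Order.succ κ).ord,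
      ∃ i < θ.ord, f α i = x} =
      ⋃ i ∈ Set.Iio θ.ord, (fun α => f α i) '' (b '' Set.Iio (Order.succ κ).ord) := by
    ext x
    simp only [Set.mem_setOf_eq, Set.mem_iUnion, Set.mem_image, Set.mem_Iio]
    constructor
    · rintro ⟨α, hα, i, hi, hfx⟩
      exact ⟨i, hi, α, hα, hfx⟩
    · rintro ⟨i, hi, α, hα, hfx⟩
      exact ⟨α, hα, i, hi, hfx⟩
  have hcard1 : #({x : Ordinal.{u} | ∃ α ∈ b '' Set.Iio (Order.succ κ).ord,
      ∃ i < θ.ord, f α i = x}) = Cardinal.lift.{u + 1} (Order.succ κ) := by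
    have h := Cardinal.mk_congr (Set.BijOn.equiv e he)
    rw [Ordinal.mk_Iio_ordinal, Cardinal.card_ord] at h
    exact h.symm
  have hcard2 : #({x : Ordinal.{u} | ∃ α ∈ b '' Set.Iio (Order.succ κ).ord,
      ∃ i < θ.ord, f α i = x}) ≤ Cardinal.lift.{u + 1} κ := by
    rw [hBeq]
    refine le_trans (Cardinal.mk_biUnion_le _ _) ?_
    have h1 : #(Set.Iio θ.ord) = Cardinal.lift.{u + 1} θ := by
      rw [Ordinal.mk_Iio_ordinal, Cardinal.card_ord]
    have hne : Nonempty ↥(Set.Iio θ.ord) :=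
      ⟨⟨0, Set.mem_Iio.2 (pos_iff_ne_zero.2 hθne)⟩⟩
    have h2 : ⨆ i : ↥(Set.Iio θ.ord),
        #((fun α => f α i.1) '' (b '' Set.Iio (Order.succ κ).ord)) ≤
        Cardinal.lift.{u + 1} κ := ciSup_le fun i => hslice i.1 i.2
    calc #(Set.Iio θ.ord) * ⨆ i : ↥(Set.Iio θ.ord),
          #((fun α => f α i.1) '' (b '' Set.Iio (Order.succ κ).ord))
        ≤ Cardinal.lift.{u + 1} θ * Cardinal.lift.{u + 1} κ := by
          rw [h1]; exact mul_le_mul_right h2 _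
      _ = Cardinal.lift.{u + 1} (θ * κ) := (Cardinal.lift_mul θ κ).symm
      _ = Cardinal.lift.{u + 1} κ := by
          rw [Cardinal.mul_eq_right hκℵ₀ hθκ hθ.pos.ne']
  rw [hcard1] at hcard2
  exact absurd (Cardinal.lift_le.1 hcard2) (not_le.2 (Order.lt_succ κ))
end

section
/- Let θ be a regular cardinal with θ > ω₂, and let M and N be countable sets with M ≺ N ≺ (H(θ), ∈), i.e., M is an elementary substructure of N and N is an elementary substructure of H(θ) in the language with one binary relation symbol interpreted as membership. If M ∩ ω₁ = N ∩ ω₁, then N is an ω₂-end-extension of M, i.e., every ordinal ξ ∈ N ∩ ω₂ satisfies ξ ∈ M or ξ ≥ sup(M ∩ ω₂). -/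
open FirstOrder

universe u

/-- The first-order structure on a set `s` of ZF sets, in the language `Language.graph`
of a single binary relation symbol, interpreting the relation as membership `∈`. -/
def memStructure (s : Set ZFSet.{u}) : Language.graph.Structure ↥s where
  funMap := fun f _ => nomatch f
  RelMap := fun r x => match r with | .adj => (x 0).val ∈ (x 1).val

/-- Realization of a first-order formula (in the language of one binary relation)
in the set `s` of ZF sets, where the relation is interpreted as membership. -/
def RealizeIn (s : Set ZFSet.{u}) {n : ℕ} (φ : Language.graph.Formula (Fin n))
    (v : Fin n → ↥s) : Prop :=
  letI := memStructure s
  φ.Realize v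

/-- `s ≺ t`: `s ⊆ t` and, with both regarded as `∈`-structures, every first-order
formula with parameters from `s` holds in `s` iff it holds in `t`. -/
def ElemSubset (s t : Set ZFSet.{u}) : Prop :=
  ∃ h : s ⊆ t, ∀ (n : ℕ) (φ : Language.graph.Formula (Fin n)) (v : Fin n → ↥s),
    RealizeIn s φ v ↔ RealizeIn t φ (Set.inclusion h ∘ v)

/-- `H(θ)`: the collection of ZF sets whose transitive closure has cardinality `< θ`. -/
def HSet (θ : Cardinal.{u + 1}) : Set ZFSet.{u} :=
  {x | Cardinal.mk {y : ZFSet.{u} // Relation.TransGen (· ∈ ·) y x} < θ}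

/-- `o` is the von Neumann ordinal `ω₁` (resp. `ω₂` for `c = ℵ₂`): the least
(von Neumann) ordinal of cardinality `c`. -/
def IsVNInitialOrdinal (c : Cardinal.{u + 1}) (o : ZFSet.{u}) : Prop :=
  o.IsOrdinal ∧ Cardinal.mk o.toSet = c ∧ ∀ y ∈ o.toSet, Cardinal.mk (ZFSet.toSet y) < c

namespace ZFSet
variable {θ : Cardinal.{u+1}} {x y z a b : ZFSet.{u}}

theorem mem_toSet (a u : ZFSet.{u}) : a ∈ u.toSet ↔ a ∈ u := Iff.rfl

theorem toSet_insert (a u : ZFSet.{u}) : (insert a u : ZFSet.{u}).toSet = insert a u.toSet :=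
  coe_insert a u

theorem toSet_singleton (a : ZFSet.{u}) : ({a} : ZFSet.{u}).toSet = {a} :=
  coe_singleton a


theorem IsOrdinal.mem_ord (hx : x.IsOrdinal) (hy : y ∈ x) : y.IsOrdinal := by
  constructor
  · intro a ha b hb
    exact hx.mem_trans' hb ha hy
  · intro a b c hab hbc hcy
    exact hx.mem_trans' hab hbc (hx.mem_trans hcy hy)

theorem IsOrdinal.mem_trichot : ∀ x : ZFSet.{u}, x.IsOrdinal →
    ∀ y : ZFSet.{u}, y.IsOrdinal → x ∈ y ∨ x = y ∨ y ∈ x := by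
  intro x
  induction x using ZFSet.mem_wf.induction with
  | _ x IH1 =>
  intro hx y
  induction y using ZFSet.mem_wf.induction with
  | _ y IH2 =>
  intro hy
  by_cases h1 : ∃ y' ∈ y, y' ∉ x
  · obtain ⟨y', hy'y, hy'x⟩ := h1
    rcases IH2 y' hy'y (hy.mem_ord hy'y) with h | h | h
    · exact Or.inl (hy.mem_trans h hy'y)
    · exact Or.inl (h ▸ hy'y)
    · exact absurd h hy'x
  · push_neg at h1
    by_cases h2 : ∃ x' ∈ x, x' ∉ y
    · obtain ⟨x', hx'x, hx'y⟩ := h2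
      rcases IH1 x' hx'x (hx.mem_ord hx'x) y hy with h | h | h
      · exact absurd h hx'y
      · exact Or.inr (Or.inr (h ▸ hx'x))
      · exact Or.inr (Or.inr (hx.mem_trans h hx'x))
    · push_neg at h2
      exact Or.inr (Or.inl (ZFSet.ext fun z => ⟨fun hz => h2 z hz, fun hz => h1 z hz⟩))

theorem transGen_mem (h : Relation.TransGen (· ∈ ·) z x) : x.IsOrdinal → z ∈ x := by
  induction h with
  | single h => exact fun _ => h
  | tail h1 h2 ih => exact fun hc => hc.mem_trans (ih (hc.mem_ord h2)) h2

theorem transGen_mem_iff (hx : x.IsOrdinal) :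
    Relation.TransGen (· ∈ ·) z x ↔ z ∈ x :=
  ⟨fun h => transGen_mem h hx, fun h => Relation.TransGen.single h⟩

theorem mem_HSet_of_mem (hx : x ∈ HSet θ) (hyx : y ∈ x) : y ∈ HSet θ := by
  refine lt_of_le_of_lt (Cardinal.mk_le_of_injective
    (f := fun z : {z : ZFSet.{u} // Relation.TransGen (· ∈ ·) z y} =>
      (⟨z.1, z.2.tail hyx⟩ : {z : ZFSet.{u} // Relation.TransGen (· ∈ ·) z x})) ?_) hx
  intro a b h
  simp only [Subtype.mk.injEq] at h
  exact Subtype.ext h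

theorem HSet_small (hreg : θ.IsRegular) (hx : Cardinal.mk x.toSet < θ)
    (h : ∀ y ∈ x, y ∈ HSet θ) : x ∈ HSet θ := by
  classical
  have hsub : {z : ZFSet.{u} | Relation.TransGen (· ∈ ·) z x} ⊆
      x.toSet ∪ ⋃ (y : ↥x.toSet), {z : ZFSet.{u} | Relation.TransGen (· ∈ ·) z y.1} := by
    intro z hz
    cases hz with
    | single h0 => exact Or.inl ((mem_toSet _ _).2 h0)
    | tail h1 h2 =>
      exact Or.inr (Set.mem_iUnion.2 ⟨⟨_, (mem_toSet _ _).2 h2⟩, h1⟩)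
  have h1 : Cardinal.mk {z : ZFSet.{u} | Relation.TransGen (· ∈ ·) z x} ≤
      Cardinal.mk ↥(x.toSet ∪ ⋃ (y : ↥x.toSet), {z : ZFSet.{u} | Relation.TransGen (· ∈ ·) z y.1}) :=
    Cardinal.mk_le_mk_of_subset hsub
  refine lt_of_le_of_lt h1 (lt_of_le_of_lt (Cardinal.mk_union_le _ _) ?_)
  apply Cardinal.add_lt_of_lt hreg.aleph0_le hx
  refine lt_of_le_of_lt (Cardinal.mk_iUnion_le_sum_mk) ?_
  exact Cardinal.sum_lt_of_isRegular hreg hx fun w => h w.1 ((mem_toSet _ _).1 w.2)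

theorem ord_mem_HSet (hx : x.IsOrdinal) (h : Cardinal.mk x.toSet < θ) : x ∈ HSet θ := by
  have : Cardinal.mk {z : ZFSet.{u} // Relation.TransGen (· ∈ ·) z x} = Cardinal.mk x.toSet :=
    Cardinal.mk_congr (Equiv.subtypeEquivRight fun z =>
      (transGen_mem_iff hx).trans (mem_toSet _ _).symm)
  exact lt_of_eq_of_lt this h

theorem pair_mem_HSet' (hreg : θ.IsRegular) (ha : a ∈ HSet θ) (hb : b ∈ HSet θ) :
    ({a, b} : ZFSet.{u}) ∈ HSet θ := by
  refine HSet_small hreg ?_ ?_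
  · rw [toSet_insert, toSet_singleton]
    exact lt_of_lt_of_le (((Set.finite_singleton b).insert a).lt_aleph0)
      hreg.aleph0_le
  · intro y hy
    rcases mem_pair.1 hy with rfl | rfl <;> assumption

theorem singleton_mem_HSet (hreg : θ.IsRegular) (ha : a ∈ HSet θ) :
    ({a} : ZFSet.{u}) ∈ HSet θ := by
  have e : ({a, a} : ZFSet.{u}) = {a} := ZFSet.ext fun z => by simp [mem_pair]
  have := pair_mem_HSet' hreg ha ha
  rwa [e] at this

theorem kpair_mem_HSet (hreg : θ.IsRegular) (ha : a ∈ HSet θ) (hb : b ∈ HSet θ) :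
    ZFSet.pair a b ∈ HSet θ :=
  pair_mem_HSet' hreg (singleton_mem_HSet hreg ha) (pair_mem_HSet' hreg ha hb)

end ZFSet

def SurR (f w z : ZFSet.{u}) : Prop :=
  (∀ p ∈ f, ∃ a ∈ w, ∃ b ∈ z, p = ZFSet.pair a b) ∧
  (∀ a b b' : ZFSet.{u}, ZFSet.pair a b ∈ f → ZFSet.pair a b' ∈ f → b = b') ∧
  (∀ a ∈ w, ∃ b, ZFSet.pair a b ∈ f) ∧
  (∀ b ∈ z, ∃ a, ZFSet.pair a b ∈ f)

theorem SurR.snd_mem {f w z a b : ZFSet.{u}} (h : SurR f w z) (hab : ZFSet.pair a b ∈ f) :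
    b ∈ z := by
  obtain ⟨a', ha', b', hb', heq⟩ := h.1 _ hab
  obtain ⟨h1, h2⟩ := ZFSet.pair_injective heq
  rwa [h2]

theorem SurR.fst_mem {f w z a b : ZFSet.{u}} (h : SurR f w z) (hab : ZFSet.pair a b ∈ f) :
    a ∈ w := by
  obtain ⟨a', ha', b', hb', heq⟩ := h.1 _ hab
  obtain ⟨h1, h2⟩ := ZFSet.pair_injective heq
  rwa [h1]

theorem SurR.mk_le {f w z : ZFSet.{u}} (h : SurR f w z) :
    Cardinal.mk z.toSet ≤ Cardinal.mk w.toSet := by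
  classical
  have hex : ∀ a : ↥w.toSet, ∃ b, ZFSet.pair a.1 b ∈ f :=
    fun a => h.2.2.1 a.1 ((ZFSet.mem_toSet _ _).1 a.2)
  let g : ↥w.toSet → ↥z.toSet := fun a =>
    ⟨(hex a).choose, (ZFSet.mem_toSet _ _).2 (h.snd_mem (hex a).choose_spec)⟩
  apply Cardinal.mk_le_of_surjective (f := g)
  rintro ⟨b, hb⟩
  obtain ⟨a, ha⟩ := h.2.2.2 b ((ZFSet.mem_toSet _ _).1 hb)
  have haw : a ∈ w := h.fst_mem ha
  refine ⟨⟨a, (ZFSet.mem_toSet _ _).2 haw⟩, ?_⟩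
  apply Subtype.ext
  exact h.2.1 a _ b (hex ⟨a, (ZFSet.mem_toSet _ _).2 haw⟩).choose_spec ha

theorem exists_surR (w z : ZFSet.{u}) (hmk : Cardinal.mk w.toSet = Cardinal.mk z.toSet) :
    ∃ f : ZFSet.{u}, SurR f w z ∧ Cardinal.mk f.toSet ≤ Cardinal.mk w.toSet ∧
      ∀ p ∈ f, ∃ a ∈ w, ∃ b ∈ z, p = ZFSet.pair a b := by
  classical
  obtain ⟨e⟩ := Cardinal.eq.1 hmk
  set F : ZFSet.{u} → ZFSet.{u} := fun a =>
    if h : a ∈ w then (e ⟨a, (ZFSet.mem_toSet _ _).2 h⟩).1 else ∅ with hF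
  letI : ZFSet.Definable₁ F := Classical.allZFSetDefinable _
  have hFw : ∀ a, a ∈ w → F a ∈ z := by
    intro a ha
    rw [hF]
    simp only [dif_pos ha]
    exact (ZFSet.mem_toSet _ _).1 (e ⟨a, (ZFSet.mem_toSet _ _).2 ha⟩).2
  have hmem : ∀ p ∈ ZFSet.map F w, ∃ a ∈ w, ∃ b ∈ z, p = ZFSet.pair a b := by
    intro p hp
    obtain ⟨c, hc, hceq⟩ := ZFSet.mem_map.1 hp
    exact ⟨c, hc, F c, hFw c hc, hceq.symm⟩
  refine ⟨ZFSet.map F w, ⟨hmem, ?_, ?_, ?_⟩, ?_, hmem⟩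
  · intro a b b' hab hab'
    obtain ⟨c, hc, hceq⟩ := ZFSet.mem_map.1 hab
    obtain ⟨h1, h2⟩ := ZFSet.pair_injective hceq
    obtain ⟨c', hc', hceq'⟩ := ZFSet.mem_map.1 hab'
    obtain ⟨h1', h2'⟩ := ZFSet.pair_injective hceq'
    rw [← h2, ← h2', h1, h1']
  · intro a ha
    exact ⟨F a, ZFSet.mem_map.2 ⟨a, ha, rfl⟩⟩
  · intro b hb
    set a : ZFSet.{u} := (e.symm ⟨b, (ZFSet.mem_toSet _ _).2 hb⟩).1 with haeq
    have haw : a ∈ w := (ZFSet.mem_toSet _ _).1 (e.symm ⟨b, (ZFSet.mem_toSet _ _).2 hb⟩).2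
    refine ⟨a, ?_⟩
    have hFa : F a = b := by
      rw [hF]
      simp only [dif_pos haw]
      have h3 : (⟨a, (ZFSet.mem_toSet _ _).2 haw⟩ : ↥w.toSet) =
          e.symm ⟨b, (ZFSet.mem_toSet _ _).2 hb⟩ := Subtype.ext rfl
      rw [h3, Equiv.apply_symm_apply]
    rw [← hFa]
    exact ZFSet.mem_map.2 ⟨a, haw, rfl⟩
  · have : Function.Surjective (fun a : ↥w.toSet =>
        (⟨ZFSet.pair a.1 (F a.1), (ZFSet.mem_toSet _ _).2
          (ZFSet.mem_map.2 ⟨a.1, (ZFSet.mem_toSet _ _).1 a.2, rfl⟩)⟩ :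
            ↥(ZFSet.map F w).toSet)) := by
      rintro ⟨p, hp⟩
      obtain ⟨c, hc, hceq⟩ := ZFSet.mem_map.1 ((ZFSet.mem_toSet _ _).1 hp)
      exact ⟨⟨c, (ZFSet.mem_toSet _ _).2 hc⟩, Subtype.ext hceq⟩
    exact Cardinal.mk_le_of_surjective this

namespace MemFml
open FirstOrder.Language
abbrev L := Language.graph
def memf {n : ℕ} (i j : Fin n) : L.Formula (Fin n) :=
  Language.adj.formula₂ (Term.var i) (Term.var j)
def eqf {n : ℕ} (i j : Fin n) : L.Formula (Fin n) :=
  Term.equal (Term.var i) (Term.var j)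
noncomputable def iAllsR {n m k : ℕ} (f : Fin n → Fin m ⊕ Fin k) (φ : L.Formula (Fin n)) :
    L.Formula (Fin m) :=
  Formula.iAlls (Fin k) (φ.relabel f)
noncomputable def iExsR {n m k : ℕ} (f : Fin n → Fin m ⊕ Fin k) (φ : L.Formula (Fin n)) :
    L.Formula (Fin m) :=
  Formula.iExs (Fin k) (φ.relabel f)
variable {s : Set ZFSet.{u}}
theorem realizeIn_memf {n : ℕ} (i j : Fin n) (v : Fin n → ↥s) :
    RealizeIn s (memf i j) v ↔ (v i).1 ∈ (v j).1 := by
  letI := memStructure s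
  show Formula.Realize _ _ ↔ _
  rw [memf, Formula.realize_rel₂]
  simp [Term.realize, memStructure]
  exact Iff.rfl
theorem realizeIn_eqf {n : ℕ} (i j : Fin n) (v : Fin n → ↥s) :
    RealizeIn s (eqf i j) v ↔ (v i).1 = (v j).1 := by
  letI := memStructure s
  show Formula.Realize _ _ ↔ _
  rw [eqf, Formula.realize_equal]
  simp [Term.realize, Subtype.ext_iff]
theorem realizeIn_inf {n : ℕ} (φ ψ : L.Formula (Fin n)) (v : Fin n → ↥s) :
    RealizeIn s (φ ⊓ ψ) v ↔ RealizeIn s φ v ∧ RealizeIn s ψ v := by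
  letI := memStructure s
  exact Formula.realize_inf
theorem realizeIn_imp {n : ℕ} (φ ψ : L.Formula (Fin n)) (v : Fin n → ↥s) :
    RealizeIn s (φ.imp ψ) v ↔ (RealizeIn s φ v → RealizeIn s ψ v) := by
  letI := memStructure s
  exact Formula.realize_imp
theorem realizeIn_sup {n : ℕ} (φ ψ : L.Formula (Fin n)) (v : Fin n → ↥s) :
    RealizeIn s (φ ⊔ ψ) v ↔ RealizeIn s φ v ∨ RealizeIn s ψ v := by
  letI := memStructure s
  exact Formula.realize_sup
theorem realizeIn_iff {n : ℕ} (φ ψ : L.Formula (Fin n)) (v : Fin n → ↥s) :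
    RealizeIn s (φ.iff ψ) v ↔ (RealizeIn s φ v ↔ RealizeIn s ψ v) := by
  letI := memStructure s
  exact Formula.realize_iff
theorem realizeIn_not {n : ℕ} (φ : L.Formula (Fin n)) (v : Fin n → ↥s) :
    RealizeIn s φ.not v ↔ ¬ RealizeIn s φ v := by
  letI := memStructure s
  exact Formula.realize_not
theorem realizeIn_relabel {n m : ℕ} (φ : L.Formula (Fin n)) (g : Fin n → Fin m)
    (v : Fin m → ↥s) :
    RealizeIn s (φ.relabel g) v ↔ RealizeIn s φ (v ∘ g) := by
  letI := memStructure s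
  exact Formula.realize_relabel
theorem realizeIn_iAlls {n m k : ℕ} (f : Fin n → Fin m ⊕ Fin k) (φ : L.Formula (Fin n))
    (v : Fin m → ↥s) :
    RealizeIn s (iAllsR f φ) v ↔
      ∀ i : Fin k → ↥s, RealizeIn s φ (fun a => Sum.elim v i (f a)) := by
  letI := memStructure s
  exact Formula.realize_iAlls.trans (forall_congr' fun i => Formula.realize_relabel)
theorem realizeIn_iExs {n m k : ℕ} (f : Fin n → Fin m ⊕ Fin k) (φ : L.Formula (Fin n))
    (v : Fin m → ↥s) :
    RealizeIn s (iExsR f φ) v ↔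
      ∃ i : Fin k → ↥s, RealizeIn s φ (fun a => Sum.elim v i (f a)) := by
  letI := memStructure s
  exact Formula.realize_iExs.trans (exists_congr fun i => Formula.realize_relabel)

theorem cons_val_five {α : Type*} {m : ℕ} (x : α) (u : Fin (m+5) → α) :
    Matrix.vecCons x u 5 =
      Matrix.vecHead (Matrix.vecTail (Matrix.vecTail (Matrix.vecTail (Matrix.vecTail u)))) :=
  rfl

theorem fst_mem_of_pair_mem (htrans : ∀ {x y : ZFSet.{u}}, x ∈ s → y ∈ x → y ∈ s)
    {f a b : ZFSet.{u}} (hf : f ∈ s) (h : ZFSet.pair a b ∈ f) : a ∈ s := by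
  have h1 : ({a} : ZFSet.{u}) ∈ ZFSet.pair a b := by simp [ZFSet.pair, ZFSet.mem_pair]
  have h2 : a ∈ ({a} : ZFSet.{u}) := by simp
  exact htrans (htrans (htrans hf h) h1) h2

theorem snd_mem_of_pair_mem (htrans : ∀ {x y : ZFSet.{u}}, x ∈ s → y ∈ x → y ∈ s)
    {f a b : ZFSet.{u}} (hf : f ∈ s) (h : ZFSet.pair a b ∈ f) : b ∈ s := by
  have h1 : ({a, b} : ZFSet.{u}) ∈ ZFSet.pair a b := by simp [ZFSet.pair, ZFSet.mem_pair]
  have h2 : b ∈ ({a, b} : ZFSet.{u}) := by simp [ZFSet.mem_pair]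
  exact htrans (htrans (htrans hf h) h1) h2

/-! ### concrete formulas -/

/-- vars (x, a) : `x = {a}` -/
noncomputable def singF : L.Formula (Fin 2) :=
  iAllsR (![Sum.inl 0, Sum.inl 1, Sum.inr 0] : Fin 3 → Fin 2 ⊕ Fin 1)
    ((memf 2 0).iff (eqf 2 1))

/-- vars (x, a, b) : `x = {a, b}` -/
noncomputable def doubF : L.Formula (Fin 3) :=
  iAllsR (![Sum.inl 0, Sum.inl 1, Sum.inl 2, Sum.inr 0] : Fin 4 → Fin 3 ⊕ Fin 1)
    ((memf 3 0).iff ((eqf 3 1) ⊔ (eqf 3 2)))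

/-- vars (p, a, b) : `p = ⟨a, b⟩` (Kuratowski) -/
noncomputable def pairF : L.Formula (Fin 3) :=
  iAllsR (![Sum.inl 0, Sum.inl 1, Sum.inl 2, Sum.inr 0] : Fin 4 → Fin 3 ⊕ Fin 1)
    ((memf 3 0).iff ((singF.relabel ![3, 1]) ⊔ (doubF.relabel ![3, 1, 2])))

theorem abs_singF (htrans : ∀ {x y : ZFSet.{u}}, x ∈ s → y ∈ x → y ∈ s) (v : Fin 2 → ↥s) :
    RealizeIn s singF v ↔ (v 0).1 = {(v 1).1} := by
  rw [singF, realizeIn_iAlls]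
  constructor
  · intro h
    apply ZFSet.ext
    intro z
    rw [ZFSet.mem_singleton]
    constructor
    · intro hz
      have := h (fun _ => ⟨z, htrans (v 0).2 hz⟩)
      rw [realizeIn_iff, realizeIn_memf, realizeIn_eqf] at this
      simpa using this.1 (by simpa using hz)
    · rintro rfl
      have := h (fun _ => v 1)
      rw [realizeIn_iff, realizeIn_memf, realizeIn_eqf] at this
      simpa using this.2 (by simp)
  · intro h i
    rw [realizeIn_iff, realizeIn_memf, realizeIn_eqf]
    simp [h, ZFSet.mem_singleton]

theorem abs_doubF (htrans : ∀ {x y : ZFSet.{u}}, x ∈ s → y ∈ x → y ∈ s) (v : Fin 3 → ↥s) :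
    RealizeIn s doubF v ↔ (v 0).1 = {(v 1).1, (v 2).1} := by
  rw [doubF, realizeIn_iAlls]
  constructor
  · intro h
    apply ZFSet.ext
    intro z
    rw [ZFSet.mem_pair]
    constructor
    · intro hz
      have := h (fun _ => ⟨z, htrans (v 0).2 hz⟩)
      rw [realizeIn_iff, realizeIn_sup, realizeIn_eqf, realizeIn_eqf, realizeIn_memf] at this
      simpa using this.1 (by simpa using hz)
    · rintro (rfl | rfl)
      · have := h (fun _ => v 1)
        rw [realizeIn_iff, realizeIn_sup, realizeIn_eqf, realizeIn_eqf, realizeIn_memf] at this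
        simpa using this.2 (by simp)
      · have := h (fun _ => v 2)
        rw [realizeIn_iff, realizeIn_sup, realizeIn_eqf, realizeIn_eqf, realizeIn_memf] at this
        simpa using this.2 (by simp)
  · intro h i
    rw [realizeIn_iff, realizeIn_sup, realizeIn_eqf, realizeIn_eqf, realizeIn_memf]
    simp [h, ZFSet.mem_pair]

theorem shape_pairF (htrans : ∀ {x y : ZFSet.{u}}, x ∈ s → y ∈ x → y ∈ s) (v : Fin 3 → ↥s) :
    RealizeIn s pairF v ↔
      ∀ u : ↥s, (u.1 ∈ (v 0).1 ↔ (u.1 = {(v 1).1} ∨ u.1 = {(v 1).1, (v 2).1})) := by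
  rw [pairF, realizeIn_iAlls]
  refine ⟨fun h u => ?_, fun h i => ?_⟩
  · have := h (fun _ => u)
    rw [realizeIn_iff, realizeIn_sup, realizeIn_relabel, realizeIn_relabel, realizeIn_memf,
      abs_singF htrans, abs_doubF htrans] at this
    simpa using this
  · rw [realizeIn_iff, realizeIn_sup, realizeIn_relabel, realizeIn_relabel, realizeIn_memf,
      abs_singF htrans, abs_doubF htrans]
    simpa using h (i 0)

theorem abs_pairF (htrans : ∀ {x y : ZFSet.{u}}, x ∈ s → y ∈ x → y ∈ s)
    (hpair : ∀ {a b : ZFSet.{u}}, a ∈ s → b ∈ s → ({a, b} : ZFSet.{u}) ∈ s)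
    (v : Fin 3 → ↥s) :
    RealizeIn s pairF v ↔ (v 0).1 = ZFSet.pair (v 1).1 (v 2).1 := by
  have hsing : ∀ {a : ZFSet.{u}}, a ∈ s → ({a} : ZFSet.{u}) ∈ s := by
    intro a ha
    have e : ({a, a} : ZFSet.{u}) = {a} := ZFSet.ext fun z => by simp [ZFSet.mem_pair]
    have := hpair ha ha
    rwa [e] at this
  rw [shape_pairF htrans]
  constructor
  · intro h
    apply ZFSet.ext
    intro z
    rw [ZFSet.pair, ZFSet.mem_pair]
    constructor
    · intro hz
      exact (h ⟨z, htrans (v 0).2 hz⟩).1 hz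
    · rintro (rfl | rfl)
      · exact (h ⟨{(v 1).1}, hsing (v 1).2⟩).2 (Or.inl rfl)
      · exact (h ⟨{(v 1).1, (v 2).1}, hpair (v 1).2 (v 2).2⟩).2 (Or.inr rfl)
  · intro h u
    rw [h, ZFSet.pair, ZFSet.mem_pair]

/-- vars (f, a, b) : `⟨a,b⟩ ∈ f` -/
noncomputable def pairMemF : L.Formula (Fin 3) :=
  iExsR (![Sum.inl 0, Sum.inl 1, Sum.inl 2, Sum.inr 0] : Fin 4 → Fin 3 ⊕ Fin 1)
    ((memf 3 0) ⊓ (pairF.relabel ![3, 1, 2]))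

theorem abs_pairMemF (htrans : ∀ {x y : ZFSet.{u}}, x ∈ s → y ∈ x → y ∈ s)
    (hpair : ∀ {a b : ZFSet.{u}}, a ∈ s → b ∈ s → ({a, b} : ZFSet.{u}) ∈ s)
    (v : Fin 3 → ↥s) :
    RealizeIn s pairMemF v ↔ ZFSet.pair (v 1).1 (v 2).1 ∈ (v 0).1 := by
  simp only [pairMemF, realizeIn_iExs, realizeIn_inf, realizeIn_relabel, realizeIn_memf,
    abs_pairF htrans hpair, Function.comp, Sum.elim_inl, Sum.elim_inr,
    Matrix.cons_val_zero, Matrix.cons_val_one, Matrix.head_cons, Matrix.cons_val_two,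
    Matrix.tail_cons, Matrix.cons_val_three, Matrix.cons_val_fin_one, Matrix.cons_val_succ]
  constructor
  · rintro ⟨i, hmem, heq⟩
    rwa [heq] at hmem
  · intro h
    exact ⟨fun _ => ⟨ZFSet.pair (v 1).1 (v 2).1, htrans (v 0).2 h⟩, h, rfl⟩

/-- vars (f, w, z) : clause A -/
noncomputable def surA : L.Formula (Fin 3) :=
  iAllsR (![Sum.inl 0, Sum.inl 1, Sum.inl 2, Sum.inr 0] : Fin 4 → Fin 3 ⊕ Fin 1)
    ((memf 3 0).imp (iExsR
      (![Sum.inl 0, Sum.inl 1, Sum.inl 2, Sum.inl 3, Sum.inr 0, Sum.inr 1] :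
        Fin 6 → Fin 4 ⊕ Fin 2)
      ((memf 4 1) ⊓ (memf 5 2) ⊓ (pairF.relabel ![3, 4, 5]))))

/-- vars (f, w, z) : clause B (functionality) -/
noncomputable def surB : L.Formula (Fin 3) :=
  iAllsR (![Sum.inl 0, Sum.inl 1, Sum.inl 2, Sum.inr 0, Sum.inr 1, Sum.inr 2] :
      Fin 6 → Fin 3 ⊕ Fin 3)
    (((pairMemF.relabel ![0, 3, 4]) ⊓ (pairMemF.relabel ![0, 3, 5])).imp (eqf 4 5))

/-- vars (f, w, z) : clause C (totality) -/
noncomputable def surC : L.Formula (Fin 3) :=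
  iAllsR (![Sum.inl 0, Sum.inl 1, Sum.inl 2, Sum.inr 0] : Fin 4 → Fin 3 ⊕ Fin 1)
    ((memf 3 1).imp (iExsR
      (![Sum.inl 0, Sum.inl 1, Sum.inl 2, Sum.inl 3, Sum.inr 0] : Fin 5 → Fin 4 ⊕ Fin 1)
      (pairMemF.relabel ![0, 3, 4])))

/-- vars (f, w, z) : clause D (surjectivity) -/
noncomputable def surD : L.Formula (Fin 3) :=
  iAllsR (![Sum.inl 0, Sum.inl 1, Sum.inl 2, Sum.inr 0] : Fin 4 → Fin 3 ⊕ Fin 1)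
    ((memf 3 2).imp (iExsR
      (![Sum.inl 0, Sum.inl 1, Sum.inl 2, Sum.inl 3, Sum.inr 0] : Fin 5 → Fin 4 ⊕ Fin 1)
      (pairMemF.relabel ![0, 4, 3])))

/-- vars (f, w, z) : `f` is a surjection from `w` onto `z` -/
noncomputable def surF : L.Formula (Fin 3) :=
  (surA ⊓ surB) ⊓ (surC ⊓ surD)

theorem abs_surA (htrans : ∀ {x y : ZFSet.{u}}, x ∈ s → y ∈ x → y ∈ s)
    (hpair : ∀ {a b : ZFSet.{u}}, a ∈ s → b ∈ s → ({a, b} : ZFSet.{u}) ∈ s)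
    (v : Fin 3 → ↥s) :
    RealizeIn s surA v ↔ ∀ p ∈ (v 0).1, ∃ a ∈ (v 1).1, ∃ b ∈ (v 2).1, p = ZFSet.pair a b := by
  simp only [surA, realizeIn_iAlls, realizeIn_imp, realizeIn_iExs, realizeIn_inf,
    realizeIn_relabel, realizeIn_memf, abs_pairF htrans hpair, Function.comp,
    Sum.elim_inl, Sum.elim_inr, Matrix.cons_val_zero, Matrix.cons_val_one, Matrix.head_cons,
    Matrix.cons_val_two, Matrix.tail_cons, Matrix.cons_val_three, Matrix.cons_val_fin_one,
    Matrix.cons_val_four, cons_val_five, Matrix.cons_val_succ]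
  constructor
  · intro h p hp
    obtain ⟨j, hj⟩ := h (fun _ => ⟨p, htrans (v 0).2 hp⟩) hp
    exact ⟨(j 0).1, hj.1.1, (j 1).1, hj.1.2, hj.2⟩
  · intro h i hi
    obtain ⟨a, ha, b, hb, heq⟩ := h (i 0).1 hi
    exact ⟨![⟨a, htrans (v 1).2 ha⟩, ⟨b, htrans (v 2).2 hb⟩], ⟨ha, hb⟩, heq⟩

theorem abs_surB (htrans : ∀ {x y : ZFSet.{u}}, x ∈ s → y ∈ x → y ∈ s)
    (hpair : ∀ {a b : ZFSet.{u}}, a ∈ s → b ∈ s → ({a, b} : ZFSet.{u}) ∈ s)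
    (v : Fin 3 → ↥s) :
    RealizeIn s surB v ↔
      ∀ a b b' : ZFSet.{u}, ZFSet.pair a b ∈ (v 0).1 → ZFSet.pair a b' ∈ (v 0).1 → b = b' := by
  simp only [surB, realizeIn_iAlls, realizeIn_imp, realizeIn_inf, realizeIn_relabel,
    realizeIn_eqf, abs_pairMemF htrans hpair, Function.comp, Sum.elim_inl, Sum.elim_inr,
    Matrix.cons_val_zero, Matrix.cons_val_one, Matrix.head_cons, Matrix.cons_val_two,
    Matrix.tail_cons, Matrix.cons_val_three, Matrix.cons_val_fin_one, Matrix.cons_val_succ]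
  constructor
  · intro h a b b' hb hb'
    have hbs : b ∈ s := snd_mem_of_pair_mem htrans (v 0).2 hb
    have hb's : b' ∈ s := snd_mem_of_pair_mem htrans (v 0).2 hb'
    have has : a ∈ s := fst_mem_of_pair_mem htrans (v 0).2 hb
    exact h ![⟨a, has⟩, ⟨b, hbs⟩, ⟨b', hb's⟩] ⟨hb, hb'⟩
  · exact fun h i hb => h _ _ _ hb.1 hb.2

theorem abs_surC (htrans : ∀ {x y : ZFSet.{u}}, x ∈ s → y ∈ x → y ∈ s)
    (hpair : ∀ {a b : ZFSet.{u}}, a ∈ s → b ∈ s → ({a, b} : ZFSet.{u}) ∈ s)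
    (v : Fin 3 → ↥s) :
    RealizeIn s surC v ↔ ∀ a ∈ (v 1).1, ∃ b, ZFSet.pair a b ∈ (v 0).1 := by
  simp only [surC, realizeIn_iAlls, realizeIn_imp, realizeIn_iExs, realizeIn_relabel,
    realizeIn_memf, abs_pairMemF htrans hpair, Function.comp, Sum.elim_inl, Sum.elim_inr,
    Matrix.cons_val_zero, Matrix.cons_val_one, Matrix.head_cons, Matrix.cons_val_two,
    Matrix.tail_cons, Matrix.cons_val_three, Matrix.cons_val_fin_one, Matrix.cons_val_succ]
  constructor
  · intro h a ha
    obtain ⟨j, hj⟩ := h (fun _ => ⟨a, htrans (v 1).2 ha⟩) ha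
    exact ⟨(j 0).1, hj⟩
  · intro h i hi
    obtain ⟨b, hb⟩ := h (i 0).1 hi
    have hbs : b ∈ s := snd_mem_of_pair_mem htrans (v 0).2 hb
    exact ⟨fun _ => ⟨b, hbs⟩, hb⟩

theorem abs_surD (htrans : ∀ {x y : ZFSet.{u}}, x ∈ s → y ∈ x → y ∈ s)
    (hpair : ∀ {a b : ZFSet.{u}}, a ∈ s → b ∈ s → ({a, b} : ZFSet.{u}) ∈ s)
    (v : Fin 3 → ↥s) :
    RealizeIn s surD v ↔ ∀ b ∈ (v 2).1, ∃ a, ZFSet.pair a b ∈ (v 0).1 := by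
  simp only [surD, realizeIn_iAlls, realizeIn_imp, realizeIn_iExs, realizeIn_relabel,
    realizeIn_memf, abs_pairMemF htrans hpair, Function.comp, Sum.elim_inl, Sum.elim_inr,
    Matrix.cons_val_zero, Matrix.cons_val_one, Matrix.head_cons, Matrix.cons_val_two,
    Matrix.tail_cons, Matrix.cons_val_three, Matrix.cons_val_fin_one, Matrix.cons_val_succ]
  constructor
  · intro h b hb
    obtain ⟨j, hj⟩ := h (fun _ => ⟨b, htrans (v 2).2 hb⟩) hb
    exact ⟨(j 0).1, hj⟩
  · intro h i hi
    obtain ⟨a, ha⟩ := h (i 0).1 hi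
    have has : a ∈ s := fst_mem_of_pair_mem htrans (v 0).2 ha
    exact ⟨fun _ => ⟨a, has⟩, ha⟩

theorem abs_surF (htrans : ∀ {x y : ZFSet.{u}}, x ∈ s → y ∈ x → y ∈ s)
    (hpair : ∀ {a b : ZFSet.{u}}, a ∈ s → b ∈ s → ({a, b} : ZFSet.{u}) ∈ s)
    (v : Fin 3 → ↥s) :
    RealizeIn s surF v ↔ SurR (v 0).1 (v 1).1 (v 2).1 := by
  rw [surF, realizeIn_inf, realizeIn_inf, realizeIn_inf, abs_surA htrans hpair,
    abs_surB htrans hpair, abs_surC htrans hpair, abs_surD htrans hpair, SurR]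
  tauto

/-- vars (w, z) : no `f'` surjects any `w' ∈ w` onto `z` -/
noncomputable def minF : L.Formula (Fin 2) :=
  iAllsR (![Sum.inl 0, Sum.inl 1, Sum.inr 0, Sum.inr 1] : Fin 4 → Fin 2 ⊕ Fin 2)
    ((memf 2 0).imp ((surF.relabel ![3, 2, 1]).not))

theorem shape_minF (htrans : ∀ {x y : ZFSet.{u}}, x ∈ s → y ∈ x → y ∈ s)
    (hpair : ∀ {a b : ZFSet.{u}}, a ∈ s → b ∈ s → ({a, b} : ZFSet.{u}) ∈ s)
    (v : Fin 2 → ↥s) :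
    RealizeIn s minF v ↔
      ∀ w' f' : ↥s, w'.1 ∈ (v 0).1 → ¬ SurR f'.1 w'.1 (v 1).1 := by
  simp only [minF, realizeIn_iAlls, realizeIn_imp, realizeIn_not, realizeIn_relabel,
    realizeIn_memf, abs_surF htrans hpair, Function.comp, Sum.elim_inl, Sum.elim_inr,
    Matrix.cons_val_zero, Matrix.cons_val_one, Matrix.head_cons, Matrix.cons_val_two,
    Matrix.tail_cons, Matrix.cons_val_three, Matrix.cons_val_fin_one,
    Matrix.cons_val_four, cons_val_five, Matrix.cons_val_succ]
  exact ⟨fun h w' f' hw => h ![w', f'] hw, fun h i hw => h (i 0) (i 1) hw⟩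

/-- vars (z, w, f) : `w ∈ z`, `f` surjects `w` onto `z`, and `w` is minimal such. -/
noncomputable def mainInner : L.Formula (Fin 3) :=
  (memf 1 0) ⊓ (surF.relabel ![2, 1, 0]) ⊓ (minF.relabel ![1, 0])

/-- var z : there are a minimal `w ∈ z` and a surjection `f : w → z`. -/
noncomputable def mainF : L.Formula (Fin 1) :=
  iExsR (![Sum.inl 0, Sum.inr 0, Sum.inr 1] : Fin 3 → Fin 1 ⊕ Fin 2) mainInner

theorem abs_mainInner (htrans : ∀ {x y : ZFSet.{u}}, x ∈ s → y ∈ x → y ∈ s)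
    (hpair : ∀ {a b : ZFSet.{u}}, a ∈ s → b ∈ s → ({a, b} : ZFSet.{u}) ∈ s)
    (v : Fin 3 → ↥s) :
    RealizeIn s mainInner v ↔
      (v 1).1 ∈ (v 0).1 ∧ SurR (v 2).1 (v 1).1 (v 0).1 ∧
        (∀ w' f' : ↥s, w'.1 ∈ (v 1).1 → ¬ SurR f'.1 w'.1 (v 0).1) := by
  simp only [mainInner, realizeIn_inf, realizeIn_relabel, realizeIn_memf,
    abs_surF htrans hpair, shape_minF htrans hpair, Function.comp, Sum.elim_inl, Sum.elim_inr,
    Matrix.cons_val_zero, Matrix.cons_val_one, Matrix.head_cons, Matrix.cons_val_two,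
    Matrix.tail_cons, Matrix.cons_val_fin_one]
  tauto

theorem shape_mainF (v : Fin 1 → ↥s) :
    RealizeIn s mainF v ↔
      ∃ w f : ↥s, RealizeIn s mainInner ![v 0, w, f] := by
  rw [mainF, realizeIn_iExs]
  constructor
  · rintro ⟨i, hi⟩
    refine ⟨i 0, i 1, ?_⟩
    convert hi using 1
    funext a
    fin_cases a <;> simp
  · rintro ⟨w, f, hw⟩
    refine ⟨![w, f], ?_⟩
    convert hw using 1
    funext a
    fin_cases a <;> simp

/-- vars (f, w, ξ, α, p) -/
noncomputable def extNInner : L.Formula (Fin 5) :=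
  (memf 3 1) ⊓ (memf 4 0) ⊓ (pairF.relabel ![4, 3, 2])

/-- vars (f, w, ξ) : `∃ α ∈ w, ⟨α, ξ⟩ ∈ f` -/
noncomputable def extNF : L.Formula (Fin 3) :=
  iExsR (![Sum.inl 0, Sum.inl 1, Sum.inl 2, Sum.inr 0, Sum.inr 1] :
    Fin 5 → Fin 3 ⊕ Fin 2) extNInner

theorem abs_extNInner (htrans : ∀ {x y : ZFSet.{u}}, x ∈ s → y ∈ x → y ∈ s)
    (hpair : ∀ {a b : ZFSet.{u}}, a ∈ s → b ∈ s → ({a, b} : ZFSet.{u}) ∈ s)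
    (v : Fin 5 → ↥s) :
    RealizeIn s extNInner v ↔
      ((v 3).1 ∈ (v 1).1 ∧ (v 4).1 ∈ (v 0).1) ∧ (v 4).1 = ZFSet.pair (v 3).1 (v 2).1 := by
  simp only [extNInner, realizeIn_inf, realizeIn_relabel, realizeIn_memf,
    abs_pairF htrans hpair, Function.comp, Sum.elim_inl, Sum.elim_inr,
    Matrix.cons_val_zero, Matrix.cons_val_one, Matrix.head_cons, Matrix.cons_val_two,
    Matrix.tail_cons, Matrix.cons_val_three, Matrix.cons_val_fin_one,
    Matrix.cons_val_four, cons_val_five, Matrix.cons_val_succ]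

theorem split_extNF (v : Fin 3 → ↥s) :
    RealizeIn s extNF v ↔ ∃ α p : ↥s, RealizeIn s extNInner ![v 0, v 1, v 2, α, p] := by
  rw [extNF, realizeIn_iExs]
  constructor
  · rintro ⟨i, hi⟩
    refine ⟨i 0, i 1, ?_⟩
    convert hi using 1
    funext a
    fin_cases a <;> simp
  · rintro ⟨α, p, h⟩
    refine ⟨![α, p], ?_⟩
    convert h using 1
    funext a
    fin_cases a <;> simp

/-- vars (f, α, y, p) -/
noncomputable def extMInner : L.Formula (Fin 4) :=
  (memf 3 0) ⊓ (pairF.relabel ![3, 1, 2])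

/-- vars (f, α) : `∃ y, ⟨α, y⟩ ∈ f` -/
noncomputable def extMF : L.Formula (Fin 2) :=
  iExsR (![Sum.inl 0, Sum.inl 1, Sum.inr 0, Sum.inr 1] : Fin 4 → Fin 2 ⊕ Fin 2)
    extMInner

theorem abs_extMInner (htrans : ∀ {x y : ZFSet.{u}}, x ∈ s → y ∈ x → y ∈ s)
    (hpair : ∀ {a b : ZFSet.{u}}, a ∈ s → b ∈ s → ({a, b} : ZFSet.{u}) ∈ s)
    (v : Fin 4 → ↥s) :
    RealizeIn s extMInner v ↔
      (v 3).1 ∈ (v 0).1 ∧ (v 3).1 = ZFSet.pair (v 1).1 (v 2).1 := by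
  simp only [extMInner, realizeIn_inf, realizeIn_relabel, realizeIn_memf,
    abs_pairF htrans hpair, Function.comp, Sum.elim_inl, Sum.elim_inr,
    Matrix.cons_val_zero, Matrix.cons_val_one, Matrix.head_cons, Matrix.cons_val_two,
    Matrix.tail_cons, Matrix.cons_val_three, Matrix.cons_val_fin_one,
    Matrix.cons_val_four, cons_val_five, Matrix.cons_val_succ]

theorem split_extMF (v : Fin 2 → ↥s) :
    RealizeIn s extMF v ↔ ∃ y p : ↥s, RealizeIn s extMInner ![v 0, v 1, y, p] := by
  rw [extMF, realizeIn_iExs]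
  constructor
  · rintro ⟨i, hi⟩
    refine ⟨i 0, i 1, ?_⟩
    convert hi using 1
    funext a
    fin_cases a <;> simp
  · rintro ⟨y, p, h⟩
    refine ⟨![y, p], ?_⟩
    convert h using 1
    funext a
    fin_cases a <;> simp
end MemFml

open MemFml

/-- Let `θ` be a regular cardinal with `θ > ω₂`, and let `M, N` be
countable sets with `M ≺ N ≺ (H(θ), ∈)`. If `M ∩ ω₁ = N ∩ ω₁` then `N` is an
`ω₂`-end-extension of `M`: every ordinal `ξ ∈ N ∩ ω₂` satisfies `ξ ∈ M` or
`ξ ≥ sup (M ∩ ω₂)` (i.e. `ζ ≤ ξ`, that is `ζ ⊆ ξ`, for every `ζ ∈ M ∩ ω₂`). -/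
theorem end_extension_of_omega1_eq (θ : Cardinal.{u + 1}) (o1 o2 : ZFSet.{u})
    (M N : Set ZFSet.{u})
    (hθreg : θ.IsRegular) (hθ : Cardinal.aleph 2 < θ)
    (ho1 : IsVNInitialOrdinal (Cardinal.aleph 1) o1)
    (ho2 : IsVNInitialOrdinal (Cardinal.aleph 2) o2)
    (hMc : M.Countable) (hNc : N.Countable)
    (hMN : ElemSubset M N) (hNH : ElemSubset N (HSet θ))
    (homega1 : M ∩ o1.toSet = N ∩ o1.toSet) :
    ∀ ξ ∈ N ∩ o2.toSet, ξ ∈ M ∨ ∀ ζ ∈ M ∩ o2.toSet, ζ ⊆ ξ := by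
  classical
  intro ξ hξ
  by_contra hcon
  push_neg at hcon
  obtain ⟨hξM, ζ, hζmem, hζsub⟩ := hcon
  obtain ⟨hξN, hξo2'⟩ := hξ
  obtain ⟨hζM, hζo2'⟩ := hζmem
  have hξo2 : ξ ∈ o2 := (ZFSet.mem_toSet _ _).1 hξo2'
  have hζo2 : ζ ∈ o2 := (ZFSet.mem_toSet _ _).1 hζo2'
  have hξord : ξ.IsOrdinal := ho2.1.mem_ord hξo2
  have hζord : ζ.IsOrdinal := ho2.1.mem_ord hζo2
  have hξζ : ξ ∈ ζ := by
    rcases ZFSet.IsOrdinal.mem_trichot ξ hξord ζ hζord with h | h | h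
    · exact h
    · refine absurd (fun t ht => ?_) hζsub
      rwa [h]
    · exact absurd (hξord.subset_of_mem h) hζsub
  have hmain : o1 ∈ ζ := by
    rcases ZFSet.IsOrdinal.mem_trichot ζ hζord o1 ho1.1 with h | h | h
    · exfalso
      have hξo1 : ξ ∈ o1 := ho1.1.mem_trans hξζ h
      have hmem : ξ ∈ M ∩ o1.toSet := by
        rw [homega1]
        exact ⟨hξN, (ZFSet.mem_toSet _ _).2 hξo1⟩
      exact hξM hmem.1
    · exfalso
      have hξo1 : ξ ∈ o1 := h ▸ hξζ
      have hmem : ξ ∈ M ∩ o1.toSet := by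
        rw [homega1]
        exact ⟨hξN, (ZFSet.mem_toSet _ _).2 hξo1⟩
      exact hξM hmem.1
    · exact h
  obtain ⟨hMNsub, hMNiff⟩ := hMN
  obtain ⟨hNHsub, hNHiff⟩ := hNH
  have hMHsub : M ⊆ HSet θ := hMNsub.trans hNHsub
  have hMHiff : ∀ (n : ℕ) (φ : Language.graph.Formula (Fin n)) (v : Fin n → ↥M),
      RealizeIn M φ v ↔ RealizeIn (HSet θ) φ (Set.inclusion hMHsub ∘ v) := by
    intro n φ v
    rw [hMNiff n φ v, hNHiff n φ _]
    exact iff_of_eq (congrArg _ (funext fun i => rfl))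
  have htransH : ∀ {x y : ZFSet.{u}}, x ∈ HSet θ → y ∈ x → y ∈ HSet θ :=
    fun hx hy => ZFSet.mem_HSet_of_mem hx hy
  have hpairH : ∀ {a b : ZFSet.{u}}, a ∈ HSet θ → b ∈ HSet θ →
      ({a, b} : ZFSet.{u}) ∈ HSet θ := fun ha hb => ZFSet.pair_mem_HSet' hθreg ha hb
  have haleph1θ : Cardinal.aleph 1 < θ :=
    lt_trans (Cardinal.aleph_lt_aleph.2 one_lt_two) hθ
  have h21 : (2 : Ordinal) = Order.succ 1 := by
    rw [← Ordinal.add_one_eq_succ, one_add_one_eq_two]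
  have haleph2succ : Cardinal.aleph 2 = Order.succ (Cardinal.aleph 1) := by
    rw [h21]
    exact Cardinal.aleph_succ 1
  have hmkζ : Cardinal.mk ζ.toSet = Cardinal.aleph 1 := by
    apply le_antisymm
    · have h2 : Cardinal.mk ζ.toSet < Cardinal.aleph 2 := ho2.2.2 ζ hζo2'
      rw [haleph2succ, Order.lt_succ_iff] at h2
      exact h2
    · rw [← ho1.2.1]
      apply Cardinal.mk_le_mk_of_subset
      intro t ht
      rw [ZFSet.mem_toSet] at ht ⊢
      exact hζord.subset_of_mem hmain ht
  have ho1H : o1 ∈ HSet θ := ZFSet.ord_mem_HSet ho1.1 (by rw [ho1.2.1]; exact haleph1θ)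
  have hζH : ζ ∈ HSet θ := hMHsub hζM
  have hξH : ξ ∈ HSet θ := hNHsub hξN
  obtain ⟨fstar, hfstar, hfcard, hfmemd⟩ := exists_surR o1 ζ (by rw [ho1.2.1, hmkζ])
  have hfstarH : fstar ∈ HSet θ := by
    refine ZFSet.HSet_small hθreg (lt_of_le_of_lt hfcard (by rw [ho1.2.1]; exact haleph1θ)) ?_
    intro p hp
    obtain ⟨a, ha, b, hb, rfl⟩ := hfmemd p hp
    exact ZFSet.kpair_mem_HSet hθreg (htransH ho1H ha) (htransH hζH hb)
  have hminH : ∀ w' f' : ↥(HSet θ), w'.1 ∈ o1 → ¬ SurR f'.1 w'.1 ζ := by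
    intro w' f' hw' hsur
    have h1 := hsur.mk_le
    rw [hmkζ] at h1
    exact absurd (lt_of_le_of_lt h1 (ho1.2.2 w'.1 ((ZFSet.mem_toSet _ _).2 hw')))
      (lt_irrefl _)
  have hmainH : RealizeIn (HSet θ) mainF (fun _ => ⟨ζ, hζH⟩) := by
    rw [shape_mainF]
    refine ⟨⟨o1, ho1H⟩, ⟨fstar, hfstarH⟩, ?_⟩
    rw [abs_mainInner htransH hpairH]
    refine ⟨by simpa using hmain, by simpa using hfstar, ?_⟩
    intro w' f' hw'
    simpa using hminH w' f' (by simpa using hw')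
  have hvM : (Set.inclusion hMHsub ∘ (fun _ : Fin 1 => (⟨ζ, hζM⟩ : ↥M))) =
      (fun _ : Fin 1 => (⟨ζ, hζH⟩ : ↥(HSet θ))) := rfl
  have hmainM : RealizeIn M mainF (fun _ => ⟨ζ, hζM⟩) := by
    rw [hMHiff 1 mainF _, hvM]
    exact hmainH
  obtain ⟨w, f, hwf⟩ := (shape_mainF _).1 hmainM
  have hwfH := (hMHiff 3 mainInner _).1 hwf
  rw [abs_mainInner htransH hpairH] at hwfH
  have hwζ : w.1 ∈ ζ := by simpa using hwfH.1
  have hsurf : SurR f.1 w.1 ζ := by simpa using hwfH.2.1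
  have hminw : ∀ w' f' : ↥(HSet θ), w'.1 ∈ w.1 → ¬ SurR f'.1 w'.1 ζ := by
    intro w' f' hmem
    have h3 := hwfH.2.2 w' f' (by simpa using hmem)
    simpa using h3
  have hword : w.1.IsOrdinal := hζord.mem_ord hwζ
  have hwo1 : w.1 = o1 := by
    rcases ZFSet.IsOrdinal.mem_trichot w.1 hword o1 ho1.1 with h | h | h
    · exfalso
      have h1 := hsurf.mk_le
      rw [hmkζ] at h1
      exact absurd (lt_of_le_of_lt h1 (ho1.2.2 w.1 ((ZFSet.mem_toSet _ _).2 h)))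
        (lt_irrefl _)
    · exact h
    · exact absurd hfstar (hminw ⟨o1, ho1H⟩ ⟨fstar, hfstarH⟩ h)
  have ho1M : o1 ∈ M := hwo1 ▸ w.2
  rw [hwo1] at hsurf
  obtain ⟨α0, hα0f⟩ := hsurf.2.2.2 ξ hξζ
  have hα0o1 : α0 ∈ o1 := hsurf.fst_mem hα0f
  have hfH : f.1 ∈ HSet θ := hMHsub f.2
  have hextH : RealizeIn (HSet θ) extNF ![⟨f.1, hfH⟩, ⟨o1, ho1H⟩, ⟨ξ, hξH⟩] := by
    rw [split_extNF]
    refine ⟨⟨α0, htransH ho1H hα0o1⟩, ⟨ZFSet.pair α0 ξ, htransH hfH hα0f⟩, ?_⟩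
    rw [abs_extNInner htransH hpairH]
    exact ⟨⟨by simpa using hα0o1, by simpa using hα0f⟩, by simp⟩
  have hfN : f.1 ∈ N := hMNsub f.2
  have ho1N : o1 ∈ N := hMNsub ho1M
  have hvN : (Set.inclusion hNHsub ∘ (![⟨f.1, hfN⟩, ⟨o1, ho1N⟩, ⟨ξ, hξN⟩] : Fin 3 → ↥N)) =
      ![⟨f.1, hfH⟩, ⟨o1, ho1H⟩, ⟨ξ, hξH⟩] := by
    funext i
    fin_cases i <;> rfl
  have hextN : RealizeIn N extNF ![⟨f.1, hfN⟩, ⟨o1, ho1N⟩, ⟨ξ, hξN⟩] := by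
    rw [hNHiff 3 extNF _, hvN]
    exact hextH
  obtain ⟨αN, pN, hNinner⟩ := (split_extNF _).1 hextN
  have hNinnerH := (hNHiff 5 extNInner _).1 hNinner
  rw [abs_extNInner htransH hpairH] at hNinnerH
  have hα1 : αN.1 ∈ o1 := by simpa using hNinnerH.1.1
  have hpf : pN.1 ∈ f.1 := by simpa using hNinnerH.1.2
  have hpeq : pN.1 = ZFSet.pair αN.1 ξ := by simpa using hNinnerH.2
  have hαM : αN.1 ∈ M := by
    have hmem : αN.1 ∈ M ∩ o1.toSet := by
      rw [homega1]
      exact ⟨αN.2, (ZFSet.mem_toSet _ _).2 hα1⟩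
    exact hmem.1
  have hαH : αN.1 ∈ HSet θ := hMHsub hαM
  have hpairmem : ZFSet.pair αN.1 ξ ∈ f.1 := hpeq ▸ hpf
  have hextMH : RealizeIn (HSet θ) extMF ![⟨f.1, hfH⟩, ⟨αN.1, hαH⟩] := by
    rw [split_extMF]
    refine ⟨⟨ξ, hξH⟩, ⟨ZFSet.pair αN.1 ξ, htransH hfH hpairmem⟩, ?_⟩
    rw [abs_extMInner htransH hpairH]
    exact ⟨by simpa using hpairmem, by simp⟩
  have hvM2 : (Set.inclusion hMHsub ∘ (![f, ⟨αN.1, hαM⟩] : Fin 2 → ↥M)) =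
      ![⟨f.1, hfH⟩, ⟨αN.1, hαH⟩] := by
    funext i
    fin_cases i <;> rfl
  have hextMM : RealizeIn M extMF ![f, ⟨αN.1, hαM⟩] := by
    rw [hMHiff 2 extMF _, hvM2]
    exact hextMH
  obtain ⟨yM, pM, hMinner⟩ := (split_extMF _).1 hextMM
  have hMinnerH := (hMHiff 4 extMInner _).1 hMinner
  rw [abs_extMInner htransH hpairH] at hMinnerH
  have hpMf : pM.1 ∈ f.1 := by simpa using hMinnerH.1
  have hpMeq : pM.1 = ZFSet.pair αN.1 yM.1 := by simpa using hMinnerH.2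
  have hyξ : yM.1 = ξ := hsurf.2.1 αN.1 yM.1 ξ (hpMeq ▸ hpMf) hpairmem
  exact hξM (hyξ ▸ yM.2)
end
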